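/- arXiv:1201.4724 — 6 statements merged into one kernel-verified Lean document; each statement's English description precedes it below -/
import Mathlib

section
/- In a Bayesian network with junction tree, for any tree edge i–j, the set fa(U_{i→j}) \ U_{i→j} of parents of upstream variables that are not themselves upstream is contained in the separator S_{ij} = C_i ∩ C_j. -/
open Finset
open scoped Classical

/-- A junction tree for a Bayesian network with variable index set `U`:
a tree of clusters `C i ⊆ U` (indexed by `I`) satisfying the covering property
(via a cluster assignment `cl` with `fa(u) = {u} ∪ pa(u) ⊆ C (cl u)`) and the
running-intersection property. -/
structure JT (U : Type) [Fintype U] [DecidableEq U] (I : Type) [Fintype I] where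
  /-- the tree on clusters -/
  G : SimpleGraph I
  tree : G.IsTree
  /-- the clusters -/
  C : I → Finset U
  /-- the parent sets of the DAG of the Bayesian network -/
  pa : U → Finset U
  /-- the cluster assignment -/
  cl : U → I
  /-- covering: the family fa(u) of each variable is contained in its assigned cluster -/
  cover : ∀ u : U, insert u (pa u) ⊆ C (cl u)
  /-- running intersection -/
  runInter : ∀ i j : I, ∀ pth : G.Path i j, ∀ k ∈ pth.1.support, C i ∩ C j ⊆ C k

/-- The upstream set U_{i→j} : variables whose assigned cluster lies on the `i` side
of the edge i–j, i.e. `i` is on the path from `cl u` to `j`. -/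
noncomputable def upSet {U I : Type} [Fintype U] [DecidableEq U] [Fintype I]
    (J : JT U I) (i j : I) : Finset U :=
  Finset.univ.filter fun u => ∃ pth : J.G.Path (J.cl u) j, i ∈ pth.1.support

/-- The separator S_{ij} = C i ∩ C j of an edge. -/
def sep {U I : Type} [Fintype U] [DecidableEq U] [Fintype I]
    (J : JT U I) (i j : I) : Finset U := J.C i ∩ J.C j

/-- Marginal of a nonnegative function `f` on assignments: sum of `f` over all
assignments agreeing with `x` on the coordinates in `A`. -/
noncomputable def margOn {U : Type} [Fintype U] [DecidableEq U] {D : U → Type}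
    [∀ u, Fintype (D u)] [∀ u, DecidableEq (D u)]
    (f : (∀ u, D u) → ℝ) (A : Finset U) (x : ∀ u, D u) : ℝ :=
  ∑ z : ∀ u, D u, if ∀ v ∈ A, z v = x v then f z else 0

/-- The message M_{i→j}(X_{S_ij}) = ∑_{X_{V_{i→j}}} ∏_{u ∈ U_{i→j}} K_u, realized as a sum
over full assignments agreeing with `x` outside V_{i→j} = U_{i→j} \ S_{ij}. -/
noncomputable def msg {U I : Type} [Fintype U] [DecidableEq U] [Fintype I]
    (J : JT U I) {D : U → Type} [∀ u, Fintype (D u)] [∀ u, DecidableEq (D u)]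
    (K : (u : U) → (∀ v, D v) → ℝ) (i j : I) (x : ∀ u, D u) : ℝ :=
  ∑ z : ∀ u, D u,
    if ∀ v, v ∉ upSet J i j \ sep J i j → z v = x v
    then ∏ u ∈ upSet J i j, K u z else 0

/-- The neighbor set n(j) of a cluster in the junction tree. -/
noncomputable def nbr {U I : Type} [Fintype U] [DecidableEq U] [Fintype I]
    (J : JT U I) (j : I) : Finset I :=
  Finset.univ.filter fun i => J.G.Adj i j

/-- The cluster potential Φ_j = ∏_{u : cl u = j} K_u. -/
noncomputable def pot {U I : Type} [Fintype U] [DecidableEq U] [Fintype I]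
    (J : JT U I) {D : U → Type} [∀ u, Fintype (D u)] [∀ u, DecidableEq (D u)]
    (K : (u : U) → (∀ v, D v) → ℝ) (j : I) (x : ∀ u, D u) : ℝ :=
  ∏ u ∈ Finset.univ.filter (fun u => J.cl u = j), K u x

private lemma aux_concat_isPath {V : Type*} {G : SimpleGraph V} {a b c : V} {p : G.Walk a b}
    (hp : p.IsPath) (hc : c ∉ p.support) (h : G.Adj b c) : (p.concat h).IsPath := by
  rw [SimpleGraph.Walk.isPath_def, SimpleGraph.Walk.support_concat]
  simp [List.nodup_append, hp.support_nodup, fun hx : c ∈ p.support => hc hx]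
  rintro x hx rfl
  exact hc hx

private lemma aux_tree_mid {V : Type*} {G : SimpleGraph V} (hT : G.IsTree) {i j a b : V}
    (hij : G.Adj i j)
    {Q : G.Walk a j} (hQ : Q.IsPath) (hiQ : i ∈ Q.support)
    {R : G.Walk b j} (hR : R.IsPath) (hiR : i ∉ R.support) :
    ∃ P : G.Walk a b, P.IsPath ∧ i ∈ P.support ∧ j ∈ P.support := by
  set Q' := Q.takeUntil i hiQ with hQ'def
  have hQ' : Q'.IsPath := hQ.takeUntil hiQ
  have hjQ' : j ∉ Q'.support := by
    have hnd : Q.support.Nodup := hQ.support_nodup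
    rw [← SimpleGraph.Walk.take_spec Q hiQ, SimpleGraph.Walk.support_append,
      List.nodup_append] at hnd
    intro hj
    refine hnd.2.2 j hj j ?_ rfl
    have hjd : j ∈ (Q.dropUntil i hiQ).support := SimpleGraph.Walk.end_mem_support _
    rw [SimpleGraph.Walk.support_eq_cons] at hjd
    rcases List.mem_cons.1 hjd with hjd | hjd
    · exact absurd hjd hij.ne'
    · exact hjd
  have hdisj : ∀ x, x ∈ Q'.support → x ∈ R.support → False := by
    intro x hx hxR
    have hjx : j ∉ (Q'.dropUntil x hx).support :=
      fun h => hjQ' (SimpleGraph.Walk.support_dropUntil_subset _ _ h)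
    have hA : ((Q'.dropUntil x hx).concat hij).IsPath :=
      aux_concat_isPath (hQ'.dropUntil hx) hjx hij
    have hB : (R.dropUntil x hxR).IsPath := hR.dropUntil hxR
    have hAB : (Q'.dropUntil x hx).concat hij = R.dropUntil x hxR :=
      (hT.existsUnique_path x j).unique hA hB
    have hiA : i ∈ ((Q'.dropUntil x hx).concat hij).support := by
      rw [SimpleGraph.Walk.support_concat]
      exact List.mem_append_left _ (SimpleGraph.Walk.end_mem_support _)
    rw [hAB] at hiA
    exact hiR (SimpleGraph.Walk.support_dropUntil_subset _ _ hiA)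
  refine ⟨Q'.append (SimpleGraph.Walk.cons hij R.reverse), ?_, ?_, ?_⟩
  · rw [SimpleGraph.Walk.isPath_def, SimpleGraph.Walk.support_append,
      SimpleGraph.Walk.support_cons, List.tail_cons, List.nodup_append]
    refine ⟨hQ'.support_nodup, hR.reverse.support_nodup, fun x hx y hx2 hxy => ?_⟩
    subst hxy
    rw [SimpleGraph.Walk.support_reverse, List.mem_reverse] at hx2
    exact hdisj x hx hx2
  · rw [SimpleGraph.Walk.mem_support_append_iff]
    exact Or.inl (SimpleGraph.Walk.end_mem_support _)
  · rw [SimpleGraph.Walk.mem_support_append_iff]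
    exact Or.inr (by
      rw [SimpleGraph.Walk.support_cons]
      exact List.mem_cons_of_mem _ (SimpleGraph.Walk.start_mem_support _))

/-- Parents of upstream variables that are not themselves upstream lie in the separator:
fa(U_{i→j}) \ U_{i→j} ⊆ S_{ij} = C_i ∩ C_j. -/
theorem jt_external_parents_in_separator {U I : Type} [Fintype U] [DecidableEq U] [Fintype I]
    (J : JT U I) (i j : I) (hij : J.G.Adj i j) (u : U)
    (hu : u ∈ (upSet J i j).biUnion (fun w => insert w (J.pa w)))
    (hnotup : u ∉ upSet J i j) :
    u ∈ J.C i ∩ J.C j := by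
  classical
  rw [Finset.mem_biUnion] at hu
  obtain ⟨w, hw, humem⟩ := hu
  simp only [upSet, Finset.mem_filter, Finset.mem_univ, true_and] at hw hnotup
  obtain ⟨Q, hiQ⟩ := hw
  obtain ⟨R, hR⟩ := (J.tree.existsUnique_path (J.cl u) j).exists
  have hiR : i ∉ R.support := fun h => hnotup ⟨⟨R, hR⟩, h⟩
  obtain ⟨P, hP, hiP, hjP⟩ := aux_tree_mid J.tree hij Q.2 hiQ hR hiR
  have hcw : u ∈ J.C (J.cl w) := J.cover w humem
  have hcu : u ∈ J.C (J.cl u) := J.cover u (Finset.mem_insert_self u _)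
  have hmem : u ∈ J.C (J.cl w) ∩ J.C (J.cl u) := Finset.mem_inter.2 ⟨hcw, hcu⟩
  exact Finset.mem_inter.2
    ⟨J.runInter _ _ ⟨P, hP⟩ i hiP hmem, J.runInter _ _ ⟨P, hP⟩ j hjP hmem⟩
end

section
/- Define for each junction-tree edge i–j the message M_{i→j}(X_{S_{ij}}) = ∑_{X_{V_{i→j}}} ∏_{u ∈ U_{i→j}} K_u(X_{fa(u)}), where V_{i→j} = U_{i→j} \ S_{ij}. Then for any edge i–j of the junction tree and any assignment of X_{S_{ij}}, P(X_{S_{ij}}, E) = M_{i→j}(X_{S_{ij}}) · M_{j→i}(X_{S_{ij}}), where E is the evidence event. -/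
open Finset
open scoped Classical

namespace JTproof

open SimpleGraph


open SimpleGraph

variable {I : Type} {G : SimpleGraph I}

/-- Every vertex is on at least one side of an edge. -/
lemma side_total (ht : G.IsTree) {i j : I} (hij : G.Adj i j) (v : I) :
    (∃ p : G.Path v j, i ∈ p.1.support) ∨ (∃ p : G.Path v i, j ∈ p.1.support) := by
  obtain ⟨w⟩ := ht.isConnected v j
  set p := w.toPath with hp
  by_cases hi : i ∈ p.1.support
  · exact Or.inl ⟨p, hi⟩
  · refine Or.inr ⟨⟨(Walk.cons hij p.1.reverse).reverse, ?_⟩, ?_⟩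
    · refine Walk.IsPath.reverse (p.2.reverse.cons ?_)
      simpa using hi
    · simp [Walk.support_reverse]

/-- A vertex cannot be on both sides of an edge. -/
lemma side_not_both (ht : G.IsTree) {i j : I} (hij : G.Adj i j) (v : I) :
    ¬((∃ p : G.Path v j, i ∈ p.1.support) ∧ (∃ p : G.Path v i, j ∈ p.1.support)) := by
  rintro ⟨⟨p, hi⟩, ⟨q, hj⟩⟩
  have ht' : (p.1.takeUntil i hi).IsPath := p.2.takeUntil hi
  have hjt : j ∉ (p.1.takeUntil i hi).support := by
    have hnd := p.2.support_nodup
    rw [← p.1.take_spec hi, Walk.support_append, List.nodup_append] at hnd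
    have hjd : j ∈ (p.1.dropUntil i hi).support.tail :=
      Walk.end_mem_tail_support_of_ne (hij.ne.symm ∘ Eq.symm ∘ id) _
    exact fun hjt => hnd.2.2 _ hjt _ hjd rfl
  have := ht.IsAcyclic.path_unique q ⟨p.1.takeUntil i hi, ht'⟩
  rw [this] at hj
  exact hjt hj

/-- Any path between the two sides of an edge passes through both endpoints. -/
lemma mem_support_of_sides (ht : G.IsTree) {i j : I} (hij : G.Adj i j) {a b : I}
    (ha : ∃ p : G.Path a j, i ∈ p.1.support) (hb : ∃ p : G.Path b i, j ∈ p.1.support)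
    (p : G.Path a b) : i ∈ p.1.support ∧ j ∈ p.1.support := by
  -- unique path b → j avoids i
  obtain ⟨qb⟩ := ht.isConnected b j
  have hqb : i ∉ qb.toPath.1.support := fun h =>
    side_not_both ht hij b ⟨⟨qb.toPath, h⟩, hb⟩
  -- unique path a → i avoids j
  obtain ⟨qa⟩ := ht.isConnected a i
  have hqa : j ∉ qa.toPath.1.support := fun h =>
    side_not_both ht hij a ⟨ha, ⟨qa.toPath, h⟩⟩
  constructor
  · by_contra hi
    -- walk a → j avoiding i
    have hw : i ∉ (p.1.append qb.toPath.1).support := by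
      rw [Walk.mem_support_append_iff]
      push_neg
      exact ⟨hi, hqb⟩
    have hsub := (p.1.append qb.toPath.1).support_toPath_subset
    obtain ⟨pa, hpa⟩ := ha
    have := ht.IsAcyclic.path_unique pa ((p.1.append qb.toPath.1).toPath)
    rw [this] at hpa
    exact hw (hsub hpa)
  · by_contra hj
    -- walk b → i avoiding j
    have hw : j ∉ (p.1.reverse.append qa.toPath.1).support := by
      rw [Walk.mem_support_append_iff]
      push_neg
      refine ⟨?_, hqa⟩
      rw [Walk.support_reverse]
      simpa using hj
    have hsub := (p.1.reverse.append qa.toPath.1).support_toPath_subset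
    obtain ⟨pb, hpb⟩ := hb
    have := ht.IsAcyclic.path_unique pb ((p.1.reverse.append qa.toPath.1).toPath)
    rw [this] at hpb
    exact hw (hsub hpb)


variable {U I : Type} [Fintype U] [DecidableEq U] [Fintype I]

lemma mem_upSet_iff (J : JT U I) {i j : I} {u : U} :
    u ∈ upSet J i j ↔ ∃ p : J.G.Path (J.cl u) j, i ∈ p.1.support := by
  simp [upSet]

lemma upSet_union (J : JT U I) {i j : I} (hij : J.G.Adj i j) (u : U) :
    u ∈ upSet J i j ∨ u ∈ upSet J j i := by
  simpa [mem_upSet_iff] using side_total J.tree hij (J.cl u)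

lemma upSet_not_both (J : JT U I) {i j : I} (hij : J.G.Adj i j) (u : U) :
    ¬(u ∈ upSet J i j ∧ u ∈ upSet J j i) := by
  rw [mem_upSet_iff, mem_upSet_iff]
  exact side_not_both J.tree hij (J.cl u)

lemma sep_comm (J : JT U I) (i j : I) : sep J j i = sep J i j :=
  Finset.inter_comm _ _

lemma cover_subset (J : JT U I) {i j : I} (hij : J.G.Adj i j) {u : U} (hu : u ∈ upSet J i j)
    {v : U} (hv : v ∈ J.C (J.cl u)) : v ∈ upSet J i j ∨ v ∈ sep J i j := by
  by_cases h : v ∈ upSet J i j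
  · exact Or.inl h
  · have hv2 : v ∈ upSet J j i := (upSet_union J hij v).resolve_left h
    obtain ⟨w⟩ := J.tree.isConnected (J.cl u) (J.cl v)
    have hmem := mem_support_of_sides J.tree hij ((mem_upSet_iff J).1 hu)
      ((mem_upSet_iff J).1 hv2) w.toPath
    have hvv : v ∈ J.C (J.cl u) ∩ J.C (J.cl v) :=
      Finset.mem_inter.2 ⟨hv, J.cover v (Finset.mem_insert_self _ _)⟩
    exact Or.inr (Finset.mem_inter.2
      ⟨J.runInter _ _ w.toPath i hmem.1 hvv, J.runInter _ _ w.toPath j hmem.2 hvv⟩)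

lemma K_prod_invariant (J : JT U I) {D : U → Type} [∀ u, Fintype (D u)]
    [∀ u, DecidableEq (D u)]
    (cpd : (u : U) → (∀ v, D v) → ℝ) (ev : (u : U) → Finset (D u))
    (K : (u : U) → (∀ v, D v) → ℝ)
    (hK : ∀ u x, K u x = (if x u ∈ ev u then (1 : ℝ) else 0) * cpd u x)
    (hloc : ∀ u x x', (∀ v ∈ insert u (J.pa u), x v = x' v) → cpd u x = cpd u x')
    {i j : I} (hij : J.G.Adj i j) {z z' : ∀ u, D u}
    (h : ∀ v, v ∉ upSet J j i \ sep J j i → z v = z' v) :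
    ∏ u ∈ upSet J i j, K u z = ∏ u ∈ upSet J i j, K u z' := by
  refine Finset.prod_congr rfl fun u hu => ?_
  have hag : ∀ v ∈ insert u (J.pa u), z v = z' v := by
    intro v hv
    refine h v fun hvV => ?_
    rw [Finset.mem_sdiff] at hvV
    have hvC := J.cover u hv
    rcases cover_subset J hij hu hvC with h1 | h1
    · exact upSet_not_both J hij v ⟨h1, hvV.1⟩
    · exact hvV.2 (by rwa [sep_comm])
  rw [hK u z, hK u z', hag u (Finset.mem_insert_self u _), hloc u z z' hag]

end JTproof

/-- Separator marginal with evidence: P(X_{S_ij}, E) = M_{i→j}(X_{S_ij}) · M_{j→i}(X_{S_ij}). -/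
theorem jt_separator_marginal {U I : Type} [Fintype U] [DecidableEq U] [Fintype I]
    (J : JT U I) {D : U → Type} [∀ u, Fintype (D u)] [∀ u, DecidableEq (D u)]
    (cpd : (u : U) → (∀ v, D v) → ℝ) (ev : (u : U) → Finset (D u))
    (K : (u : U) → (∀ v, D v) → ℝ)
    (hK : ∀ u x, K u x = (if x u ∈ ev u then (1 : ℝ) else 0) * cpd u x)
    (hloc : ∀ u x x', (∀ v ∈ insert u (J.pa u), x v = x' v) → cpd u x = cpd u x')
    (i j : I) (hij : J.G.Adj i j) (x : ∀ u, D u) :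
    margOn (fun z => ∏ u : U, K u z) (sep J i j) x = msg J K i j x * msg J K j i x := by
  classical
  have hsc : sep J j i = sep J i j := JTproof.sep_comm J i j
  rw [margOn, msg, msg, hsc]
  set S := sep J i j with hS
  set Uij := upSet J i j with hUij
  set Uji := upSet J j i with hUji
  set Vij := Uij \ S with hVij
  set Vji := Uji \ S with hVji
  -- basic set facts
  have hnotboth : ∀ u, ¬(u ∈ Uij ∧ u ∈ Uji) := JTproof.upSet_not_both J hij
  have hunion : ∀ u, u ∈ Uij ∨ u ∈ Uji := JTproof.upSet_union J hij
  have hdisj : Disjoint Uij Uji := Finset.disjoint_left.2 fun u h1 h2 => hnotboth u ⟨h1, h2⟩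
  have hVdisj : ∀ v, v ∈ Vij → v ∉ Vji := by
    intro v h1 h2
    rw [hVij, Finset.mem_sdiff] at h1
    rw [hVji, Finset.mem_sdiff] at h2
    exact hnotboth v ⟨h1.1, h2.1⟩
  have hcompS : ∀ v, v ∉ Vij → v ∉ Vji → v ∈ S := by
    intro v h1 h2
    rcases hunion v with h | h
    · by_contra hs; exact h1 (Finset.mem_sdiff.2 ⟨h, hs⟩)
    · by_contra hs; exact h2 (Finset.mem_sdiff.2 ⟨h, hs⟩)
  have hSV1 : ∀ v ∈ S, v ∉ Vij := fun v hv h => (Finset.mem_sdiff.1 h).2 hv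
  have hSV2 : ∀ v ∈ S, v ∉ Vji := fun v hv h => (Finset.mem_sdiff.1 h).2 hv
  -- the merge/split maps
  set m1 : (∀ u, D u) → (∀ u, D u) := fun z v => if v ∈ Vij then z v else x v with hm1
  set m2 : (∀ u, D u) → (∀ u, D u) := fun z v => if v ∈ Vji then z v else x v with hm2
  set mg : ((∀ u, D u) × (∀ u, D u)) → (∀ u, D u) :=
    fun p v => if v ∈ Vij then p.1 v else p.2 v with hmg
  rw [← Finset.sum_filter, ← Finset.sum_filter, ← Finset.sum_filter, Finset.sum_mul_sum,
    ← Finset.sum_product']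
  refine Finset.sum_bij' (fun z _ => (m1 z, m2 z)) (fun p _ => mg p) ?_ ?_ ?_ ?_ ?_
  · -- maps into the product
    intro z hz
    rw [Finset.mem_product]
    constructor
    · refine Finset.mem_filter.2 ⟨Finset.mem_univ _, fun v hv => ?_⟩
      simp only [hm1, if_neg hv]
    · refine Finset.mem_filter.2 ⟨Finset.mem_univ _, fun v hv => ?_⟩
      simp only [hm2, if_neg hv]
  · -- merge maps back into s
    intro p hp
    rw [Finset.mem_product] at hp
    refine Finset.mem_filter.2 ⟨Finset.mem_univ _, fun v hv => ?_⟩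
    simp only [hmg, if_neg (hSV1 v hv)]
    exact (Finset.mem_filter.1 hp.2).2 v (hSV2 v hv)
  · -- left inverse
    intro z hz
    have hzS := (Finset.mem_filter.1 hz).2
    funext v
    by_cases h1 : v ∈ Vij
    · simp only [hmg, hm1, if_pos h1]
    · simp only [hmg, hm2, if_neg h1]
      by_cases h2 : v ∈ Vji
      · rw [if_pos h2]
      · rw [if_neg h2]
        exact (hzS v (hcompS v h1 h2)).symm
  · -- right inverse
    intro p hp
    rw [Finset.mem_product] at hp
    have hp1 := (Finset.mem_filter.1 hp.1).2
    have hp2 := (Finset.mem_filter.1 hp.2).2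
    refine Prod.ext (funext fun v => ?_) (funext fun v => ?_)
    · by_cases h1 : v ∈ Vij
      · simp only [hm1, hmg, if_pos h1]
      · simp only [hm1, if_neg h1]
        exact (hp1 v h1).symm
    · by_cases h2 : v ∈ Vji
      · simp only [hm2, hmg, if_pos h2, if_neg (fun h => hVdisj v h h2)]
      · simp only [hm2, if_neg h2]
        exact (hp2 v h2).symm
  · -- values agree
    intro z hz
    have hzS := (Finset.mem_filter.1 hz).2
    have hsplit : (Finset.univ : Finset U) = Uij ∪ Uji := by
      ext u
      simp only [Finset.mem_univ, Finset.mem_union, true_iff]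
      exact hunion u
    rw [hsplit, Finset.prod_union hdisj]
    have e1 : ∏ u ∈ Uij, K u z = ∏ u ∈ Uij, K u (m1 z) := by
      rw [hUij]
      refine JTproof.K_prod_invariant J cpd ev K hK hloc hij fun v hv => ?_
      rw [hsc, ← hVji] at hv
      by_cases h1 : v ∈ Vij
      · simp only [hm1, if_pos h1]
      · simp only [hm1, if_neg h1]
        exact hzS v (hcompS v h1 hv)
    have e2 : ∏ u ∈ Uji, K u z = ∏ u ∈ Uji, K u (m2 z) := by
      rw [hUji]
      refine JTproof.K_prod_invariant J cpd ev K hK hloc hij.symm fun v hv => ?_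
      rw [← hVij] at hv
      by_cases h2 : v ∈ Vji
      · simp only [hm2, if_pos h2]
      · simp only [hm2, if_neg h2]
        exact hzS v (hcompS v hv h2)
    rw [e1, e2]
end

section
/- With messages M_{i→j}(X_{S_{ij}}) = ∑_{X_{V_{i→j}}} ∏_{u ∈ U_{i→j}} K_u(X_{fa(u)}) and cluster potentials Φ_j(X_{C_j}) = ∏_{u : cl(u) = j} K_u(X_{fa(u)}), for every cluster j of the junction tree: P(X_{C_j}, E) = Φ_j(X_{C_j}) · ∏_{i ∈ n(j)} M_{i→j}(X_{S_{ij}}), where n(j) is the set of tree-neighbors of j. -/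
open Finset
open scoped Classical

section TreeLemmas

variable {V : Type*} {G : SimpleGraph V}
open SimpleGraph Walk

lemma walk_unique (hG : G.IsAcyclic) {a b : V} {p q : G.Walk a b} (hp : p.IsPath) (hq : q.IsPath) : p = q :=
  congrArg Subtype.val (isAcyclic_iff_path_unique.mp hG ⟨p, hp⟩ ⟨q, hq⟩)

lemma path_self_support {a : V} {p : G.Walk a a} (hp : p.IsPath) : p.support = [a] := by
  cases p with
  | nil => rfl
  | cons h q =>
    exfalso
    rw [Walk.cons_isPath_iff] at hp
    exact hp.2 q.end_mem_support

lemma dropUntil_eq_singleton (hG : G.IsAcyclic) {i j k : V} {p : G.Walk k j} (hp : p.IsPath)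
    (hi : i ∈ p.support) (hadj : G.Adj i j) :
    p.dropUntil i hi = Walk.cons hadj Walk.nil :=
  walk_unique hG (hp.dropUntil hi) (Path.singleton hadj).2

lemma support_eq_of_adj (hG : G.IsAcyclic) {i j k : V} {p : G.Walk k j} (hp : p.IsPath)
    (hi : i ∈ p.support) (hadj : G.Adj i j) :
    p.support = (p.takeUntil i hi).support ++ [j] := by
  conv_lhs => rw [← p.take_spec hi]
  rw [Walk.support_append, dropUntil_eq_singleton hG hp hi hadj]
  simp

lemma end_not_mem_takeUntil (hG : G.IsAcyclic) {i j k : V} {p : G.Walk k j} (hp : p.IsPath)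
    (hi : i ∈ p.support) (hadj : G.Adj i j) :
    j ∉ (p.takeUntil i hi).support := by
  have h := hp.support_nodup
  rw [support_eq_of_adj hG hp hi hadj, List.nodup_append] at h
  intro hj
  exact h.2.2 j hj j (by simp) rfl

/-- Claim D: anything on the i-side segment has its path to j through i. -/
lemma claimD (hG : G.IsAcyclic) {i j k m : V} {p : G.Walk k j} (hp : p.IsPath)
    (hi : i ∈ p.support) (hadj : G.Adj i j) (hm : m ∈ (p.takeUntil i hi).support) :
    ∃ q : G.Walk m j, q.IsPath ∧ i ∈ q.support := by
  have htp : (p.takeUntil i hi).IsPath := hp.takeUntil hi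
  refine ⟨((p.takeUntil i hi).dropUntil m hm).append (Walk.cons hadj Walk.nil), ?_, ?_⟩
  · rw [Walk.isPath_def, Walk.support_append]
    simp only [Walk.support_cons, Walk.support_nil, List.tail_cons]
    rw [List.nodup_append]
    refine ⟨(htp.dropUntil hm).support_nodup, List.nodup_singleton _, ?_⟩
    intro a ha b hb heq
    rw [List.mem_singleton] at hb
    rw [hb] at heq
    rw [heq] at ha
    exact end_not_mem_takeUntil hG hp hi hadj ((p.takeUntil i hi).support_dropUntil_subset hm ha)
  · rw [Walk.mem_support_append_iff]
    exact Or.inl ((p.takeUntil i hi).dropUntil m hm).end_mem_support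

/-- Existence of a path to j through i, from a path to i avoiding j. -/
lemma sideE {i j b : V} (hadj : G.Adj i j) (pbi : G.Walk b i) (hbi : pbi.IsPath)
    (hj : j ∉ pbi.support) : ∃ q : G.Walk b j, q.IsPath ∧ i ∈ q.support := by
  refine ⟨pbi.append (Walk.cons hadj Walk.nil), ?_, ?_⟩
  · rw [Walk.isPath_def, Walk.support_append]
    simp only [Walk.support_cons, Walk.support_nil, List.tail_cons]
    rw [List.nodup_append]
    exact ⟨hbi.support_nodup, List.nodup_singleton _, by
      intro a ha b hb heq; rw [List.mem_singleton] at hb; rw [hb] at heq; rw [heq] at ha; exact hj ha⟩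
  · rw [Walk.mem_support_append_iff]
    exact Or.inl pbi.end_mem_support

/-- G6: if a is on the i-side and b is not, then j lies on the path from a to b. -/
lemma mem_support_of_sides (hG : G.IsAcyclic) {i j a b : V} (hadj : G.Adj i j)
    {p : G.Walk a j} (hp : p.IsPath) (hi : i ∈ p.support)
    {q : G.Walk b j} (hq : q.IsPath) (hiq : i ∉ q.support)
    {r : G.Walk a b} (hr : r.IsPath) : j ∈ r.support := by
  classical
  -- disjointness of the two sides
  have hdisj : ∀ m, m ∈ (p.takeUntil i hi).support → m ∈ q.support → False := by
    intro m hms hmq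
    obtain ⟨w1, hw1, hiw1⟩ := claimD hG hp hi hadj hms
    have hw2 : (q.dropUntil m hmq).IsPath := hq.dropUntil hmq
    have : w1 = q.dropUntil m hmq := walk_unique hG hw1 hw2
    rw [this] at hiw1
    exact hiq (q.support_dropUntil_subset hmq hiw1)
  set s := p.takeUntil i hi with hs
  have hsp : s.IsPath := hp.takeUntil hi
  have hw : (s.append (Walk.cons hadj q.reverse)).IsPath := by
    rw [Walk.isPath_def, Walk.support_append]
    simp only [Walk.support_cons, List.tail_cons]
    rw [List.nodup_append]
    refine ⟨hsp.support_nodup, by rw [Walk.support_reverse]; exact List.nodup_reverse.mpr hq.support_nodup, ?_⟩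
    intro m hms m' hmq heq
    rw [← heq] at hmq
    rw [Walk.support_reverse, List.mem_reverse] at hmq
    exact hdisj m hms hmq
  have : r = s.append (Walk.cons hadj q.reverse) := walk_unique hG hr hw
  rw [this, Walk.mem_support_append_iff]
  right
  rw [Walk.support_cons]
  right
  rw [Walk.support_reverse]
  exact List.mem_reverse.mpr q.end_mem_support

/-- G4: a nontrivial path to j passes through some neighbor of j. -/
lemma exists_adj_mem {k j : V} (hkj : k ≠ j) (p : G.Walk k j) :
    ∃ i, G.Adj i j ∧ i ∈ p.support := by
  obtain ⟨w, h, p', hp'⟩ := Walk.exists_eq_cons_of_ne (Ne.symm hkj) p.reverse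
  refine ⟨w, h.symm, ?_⟩
  have : w ∈ p.reverse.support := by rw [hp']; simp
  rwa [Walk.support_reverse, List.mem_reverse] at this


end TreeLemmas

section JTLemmas

open SimpleGraph Walk

variable {U I : Type} [Fintype U] [DecidableEq U] [Fintype I] {J : JT U I}

/-- the canonical path between two clusters -/
noncomputable def thePath (J : JT U I) (a b : I) : J.G.Path a b :=
  ((J.tree.1.preconnected a b).some).toPath

lemma mem_upSet {i j : I} {u : U} :
    u ∈ upSet J i j ↔ ∃ pth : J.G.Path (J.cl u) j, i ∈ pth.1.support := by
  simp [upSet]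

lemma mem_nbr {i j : I} : i ∈ nbr J j ↔ J.G.Adj i j := by simp [nbr]

lemma cl_ne_of_mem_upSet {i j : I} (hadj : J.G.Adj i j) {u : U}
    (hu : u ∈ upSet J i j) : J.cl u ≠ j := by
  intro h
  obtain ⟨pth, hi⟩ := mem_upSet.mp hu
  subst h
  rw [path_self_support pth.2, List.mem_singleton] at hi
  subst hi
  exact J.G.loopless.irrefl _ hadj

lemma upSet_disjoint {i i' j : I} (hadj : J.G.Adj i j) (hadj' : J.G.Adj i' j)
    (hne : i ≠ i') : Disjoint (upSet J i j) (upSet J i' j) := by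
  rw [Finset.disjoint_left]
  intro u hu hu'
  obtain ⟨p, hip⟩ := mem_upSet.mp hu
  obtain ⟨p', hip'⟩ := mem_upSet.mp hu'
  have hpp : p' = p := SimpleGraph.isAcyclic_iff_path_unique.mp J.tree.2 p' p
  rw [hpp] at hip'
  have hsupp := support_eq_of_adj J.tree.2 p.2 hip hadj
  have hi' : i' ∈ (p.1.takeUntil i hip).support := by
    rw [hsupp, List.mem_append, List.mem_singleton] at hip'
    rcases hip' with h | h
    · exact h
    · exact absurd h hadj'.ne
  obtain ⟨q, hq, hiq⟩ := claimD J.tree.2 p.2 hip hadj hi'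
  have : q = Walk.cons hadj' Walk.nil := walk_unique J.tree.2 hq (SimpleGraph.Path.singleton hadj').2
  rw [this] at hiq
  simp only [Walk.support_cons, Walk.support_nil, List.mem_cons, List.mem_singleton] at hiq
  rcases hiq with h | h | h
  · exact hne h
  · exact hadj.ne h
  · simp at h

lemma exists_upSet_mem {j : I} {u : U} (h : J.cl u ≠ j) :
    ∃ i, J.G.Adj i j ∧ u ∈ upSet J i j := by
  obtain ⟨i, hadj, hi⟩ := exists_adj_mem h (thePath J (J.cl u) j).1
  exact ⟨i, hadj, mem_upSet.mpr ⟨thePath J (J.cl u) j, hi⟩⟩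

lemma mem_sep_of_mem_upSet {i j : I} {u : U} (hu : u ∈ upSet J i j) (hC : u ∈ J.C j) :
    u ∈ sep J i j := by
  obtain ⟨p, hip⟩ := mem_upSet.mp hu
  have hCi : u ∈ J.C i := J.runInter (J.cl u) j p i hip
    (Finset.mem_inter.mpr ⟨J.cover u (Finset.mem_insert_self _ _), hC⟩)
  exact Finset.mem_inter.mpr ⟨hCi, hC⟩

lemma mem_C_of_upSet {i j : I} (hadj : J.G.Adj i j) {u v : U} (hu : u ∈ upSet J i j)
    (hv : v ∈ J.C (J.cl u)) (hnv : v ∉ upSet J i j) : v ∈ J.C j := by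
  obtain ⟨p, hip⟩ := mem_upSet.mp hu
  have hiq : i ∉ (thePath J (J.cl v) j).1.support := fun h => hnv (mem_upSet.mpr ⟨_, h⟩)
  have hjr := mem_support_of_sides J.tree.2 hadj p.2 hip (thePath J (J.cl v) j).2 hiq
    (thePath J (J.cl u) (J.cl v)).2
  exact J.runInter _ _ _ j hjr
    (Finset.mem_inter.mpr ⟨hv, J.cover v (Finset.mem_insert_self _ _)⟩)

lemma notin_biUnion_iff {j : I} {v : U} :
    (v ∉ (nbr J j).biUnion fun i => upSet J i j \ sep J i j) ↔ v ∈ J.C j := by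
  simp only [Finset.mem_biUnion, not_exists, Finset.mem_sdiff, mem_nbr, not_and, not_not]
  constructor
  · intro h
    by_contra hv
    have hcl : J.cl v ≠ j := fun e => hv (e ▸ J.cover v (Finset.mem_insert_self _ _))
    obtain ⟨i, hadj, hui⟩ := exists_upSet_mem hcl
    exact hv (Finset.mem_inter.mp (h i hadj hui)).2
  · intro hv i _ hui
    exact mem_sep_of_mem_upSet hui hv

end JTLemmas
section SumLemmas

variable {U : Type} [Fintype U] [DecidableEq U] {D : U → Type}
    [∀ u, Fintype (D u)] [∀ u, DecidableEq (D u)]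

lemma split2 (A B : Finset U) (hAB : Disjoint A B) (x : ∀ u, D u)
    (f g : (∀ u, D u) → ℝ)
    (hf : ∀ z z' : ∀ u, D u, (∀ v, v ∉ B → z v = z' v) → f z = f z')
    (hg : ∀ z z' : ∀ u, D u, (∀ v, v ∉ A → z v = z' v) → g z = g z') :
    (∑ z : ∀ u, D u, if ∀ v, v ∉ A ∪ B → z v = x v then f z * g z else 0)
      = (∑ z : ∀ u, D u, if ∀ v, v ∉ A → z v = x v then f z else 0)
        * (∑ z : ∀ u, D u, if ∀ v, v ∉ B → z v = x v then g z else 0) := by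
  classical
  rw [← Finset.sum_filter, ← Finset.sum_filter, ← Finset.sum_filter,
    Finset.sum_mul_sum, ← Finset.sum_product']
  apply Finset.sum_nbij'
    (i := fun z => ((fun v => if v ∈ A then z v else x v : ∀ u, D u),
                    (fun v => if v ∈ A then x v else z v : ∀ u, D u)))
    (j := fun p => (fun v => if v ∈ A then p.1 v else p.2 v : ∀ u, D u))
  · intro z hz
    rw [Finset.mem_filter] at hz
    rw [Finset.mem_product, Finset.mem_filter, Finset.mem_filter]
    refine ⟨⟨Finset.mem_univ _, fun v hv => by simp [hv]⟩,
      ⟨Finset.mem_univ _, fun v hv => ?_⟩⟩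
    by_cases hA : v ∈ A
    · simp [hA]
    · simp only [hA, if_neg, if_false]
      exact hz.2 v (by simp [hA, hv])
  · intro p hp
    rw [Finset.mem_product, Finset.mem_filter, Finset.mem_filter] at hp
    rw [Finset.mem_filter]
    refine ⟨Finset.mem_univ _, fun v hv => ?_⟩
    rw [Finset.mem_union] at hv
    push_neg at hv
    simp [hv.1, hp.2.2 v hv.2]
  · intro z hz
    rw [Finset.mem_filter] at hz
    funext v
    by_cases hA : v ∈ A <;> simp [hA]
  · intro p hp
    rw [Finset.mem_product, Finset.mem_filter, Finset.mem_filter] at hp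
    have h1 : ∀ v, v ∉ A → p.1 v = x v := hp.1.2
    have h2 : ∀ v, v ∉ B → p.2 v = x v := hp.2.2
    refine Prod.ext (funext fun v => ?_) (funext fun v => ?_)
    · by_cases hA : v ∈ A
      · simp [hA]
      · simp [hA, h1 v hA]
    · by_cases hA : v ∈ A
      · simp [hA, (h2 v (Finset.disjoint_left.mp hAB hA)).symm]
      · simp [hA]
  · intro z hz
    rw [Finset.mem_filter] at hz
    congr 1
    · apply hf
      intro v hvB
      by_cases hA : v ∈ A
      · simp [hA]
      · simp only [hA, if_false]
        exact hz.2 v (by simp [hA, hvB])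
    · apply hg
      intro v hA
      simp [hA]

lemma sum_indicator_eq_one (x : ∀ u, D u) :
    (∑ z : ∀ u, D u, if ∀ v, v ∉ (∅ : Finset U) → z v = x v then (1:ℝ) else 0) = 1 := by
  classical
  have h : ∀ z : ∀ u, D u, (∀ v, v ∉ (∅ : Finset U) → z v = x v) ↔ z = x := fun z =>
    ⟨fun h => funext fun v => h v (Finset.notMem_empty v), fun h v _ => by rw [h]⟩
  rw [Finset.sum_congr rfl (fun z _ => if_congr (h z) rfl rfl)]
  simp

end SumLemmas

set_option linter.unusedSectionVars false
section Main

variable {U I : Type} [Fintype U] [DecidableEq U] [Fintype I] {D : U → Type}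
    [∀ u, Fintype (D u)] [∀ u, DecidableEq (D u)]

lemma prod_upSet_local {J : JT U I} {i j : I} (hadj : J.G.Adj i j)
    (K : (u : U) → (∀ v, D v) → ℝ)
    (hKloc : ∀ u (z z' : ∀ v, D v), (∀ v ∈ insert u (J.pa u), z v = z' v) → K u z = K u z')
    {z z' : ∀ v, D v} (hzz : ∀ v, (v ∈ upSet J i j ∨ v ∈ J.C j) → z v = z' v) :
    ∏ u ∈ upSet J i j, K u z = ∏ u ∈ upSet J i j, K u z' := by
  refine Finset.prod_congr rfl fun u hu => hKloc u z z' fun v hv => ?_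
  have hvC : v ∈ J.C (J.cl u) := J.cover u hv
  by_cases h : v ∈ upSet J i j
  · exact hzz v (Or.inl h)
  · exact hzz v (Or.inr (mem_C_of_upSet hadj hu hvC h))

lemma msg_prod {J : JT U I} (K : (u : U) → (∀ v, D v) → ℝ)
    (hKloc : ∀ u (z z' : ∀ v, D v), (∀ v ∈ insert u (J.pa u), z v = z' v) → K u z = K u z')
    (j : I) (x : ∀ u, D u) (s : Finset I) (hs : s ⊆ nbr J j) :
    (∑ z : ∀ u, D u, if ∀ v, v ∉ s.biUnion (fun i => upSet J i j \ sep J i j) → z v = x v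
        then ∏ i ∈ s, ∏ u ∈ upSet J i j, K u z else 0)
    = ∏ i ∈ s, msg J K i j x := by
  classical
  revert hs
  induction s using Finset.induction_on with
  | empty =>
    intro _
    simp only [Finset.biUnion_empty, Finset.prod_empty]
    exact sum_indicator_eq_one x
  | @insert i₀ s hi₀ ih =>
    intro hs
    have hadj₀ : J.G.Adj i₀ j := mem_nbr.mp (hs (Finset.mem_insert_self _ _))
    have hs' : s ⊆ nbr J j := fun i hi => hs (Finset.mem_insert_of_mem hi)
    have hVdisj : Disjoint (upSet J i₀ j \ sep J i₀ j)
        (s.biUnion fun i => upSet J i j \ sep J i j) := by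
      rw [Finset.disjoint_biUnion_right]
      intro i hi
      exact Finset.disjoint_of_subset_left Finset.sdiff_subset
        (Finset.disjoint_of_subset_right Finset.sdiff_subset
          (upSet_disjoint hadj₀ (mem_nbr.mp (hs' hi)) (by rintro rfl; exact hi₀ hi)))
    have hkey : ∀ i' ∈ insert i₀ s, ∀ i ∈ insert i₀ s, i ≠ i' → ∀ v,
        (v ∈ upSet J i' j ∨ v ∈ J.C j) → v ∉ upSet J i j \ sep J i j := by
      intro i' hi' i hi hne v hv hvV
      rw [Finset.mem_sdiff] at hvV
      rcases hv with h | h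
      · exact Finset.disjoint_left.mp
          (upSet_disjoint (mem_nbr.mp (hs hi)) (mem_nbr.mp (hs hi')) hne) hvV.1 h
      · exact hvV.2 (mem_sep_of_mem_upSet hvV.1 h)
    have hf : ∀ z z' : ∀ u, D u,
        (∀ v, v ∉ s.biUnion (fun i => upSet J i j \ sep J i j) → z v = z' v) →
        (∏ u ∈ upSet J i₀ j, K u z) = ∏ u ∈ upSet J i₀ j, K u z' := by
      intro z z' hzz'
      refine prod_upSet_local hadj₀ K hKloc fun v hv => hzz' v fun hvB => ?_
      rw [Finset.mem_biUnion] at hvB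
      obtain ⟨i, hi, hvi⟩ := hvB
      exact hkey i₀ (Finset.mem_insert_self _ _) i (Finset.mem_insert_of_mem hi)
        (by rintro rfl; exact hi₀ hi) v hv hvi
    have hg : ∀ z z' : ∀ u, D u,
        (∀ v, v ∉ upSet J i₀ j \ sep J i₀ j → z v = z' v) →
        (∏ i ∈ s, ∏ u ∈ upSet J i j, K u z) = ∏ i ∈ s, ∏ u ∈ upSet J i j, K u z' := by
      intro z z' hzz'
      refine Finset.prod_congr rfl fun i hi => ?_
      refine prod_upSet_local (mem_nbr.mp (hs' hi)) K hKloc fun v hv => hzz' v ?_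
      exact hkey i (Finset.mem_insert_of_mem hi) i₀ (Finset.mem_insert_self _ _)
        (by rintro rfl; exact hi₀ hi) v hv
    rw [Finset.biUnion_insert]
    rw [Finset.sum_congr rfl fun z _ =>
      if_congr Iff.rfl (Finset.prod_insert (f := fun i => ∏ u ∈ upSet J i j, K u z) hi₀) rfl]
    rw [Finset.prod_insert hi₀]
    exact (split2 (upSet J i₀ j \ sep J i₀ j) (s.biUnion fun i => upSet J i j \ sep J i j)
      hVdisj x (fun z => ∏ u ∈ upSet J i₀ j, K u z)
      (fun z => ∏ i ∈ s, ∏ u ∈ upSet J i j, K u z) hf hg).trans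
      (congrArg₂ (· * ·) rfl (ih hs'))


/-- Cluster marginal with evidence: P(X_{C_j}, E) = Φ_j(X_{C_j}) · ∏_{i ∈ n(j)} M_{i→j}(X_{S_ij}). -/
theorem jt_cluster_marginal {U I : Type} [Fintype U] [DecidableEq U] [Fintype I]
    (J : JT U I) {D : U → Type} [∀ u, Fintype (D u)] [∀ u, DecidableEq (D u)]
    (cpd : (u : U) → (∀ v, D v) → ℝ) (ev : (u : U) → Finset (D u))
    (K : (u : U) → (∀ v, D v) → ℝ)
    (hK : ∀ u x, K u x = (if x u ∈ ev u then (1 : ℝ) else 0) * cpd u x)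
    (hloc : ∀ u x x', (∀ v ∈ insert u (J.pa u), x v = x' v) → cpd u x = cpd u x')
    (j : I) (x : ∀ u, D u) :
    margOn (fun z => ∏ u : U, K u z) (J.C j) x =
      pot J K j x * ∏ i ∈ nbr J j, msg J K i j x := by
  classical
  have hKloc : ∀ u (z z' : ∀ v, D v), (∀ v ∈ insert u (J.pa u), z v = z' v) → K u z = K u z' := by
    intro u z z' h
    rw [hK, hK, h u (Finset.mem_insert_self _ _), hloc u z z' h]
  have hpart : ∀ z : ∀ u, D u, (∏ u : U, K u z) =
      (∏ u ∈ Finset.univ.filter (fun u => J.cl u = j), K u z)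
        * ∏ i ∈ nbr J j, ∏ u ∈ upSet J i j, K u z := by
    intro z
    have hset : (Finset.univ : Finset U)
        = Finset.univ.filter (fun u => J.cl u = j) ∪ (nbr J j).biUnion (fun i => upSet J i j) := by
      ext u
      simp only [Finset.mem_univ, true_iff, Finset.mem_union, Finset.mem_filter,
        Finset.mem_biUnion, true_and]
      by_cases h : J.cl u = j
      · exact Or.inl h
      · obtain ⟨i, hadj, hi⟩ := exists_upSet_mem h
        exact Or.inr ⟨i, mem_nbr.mpr hadj, hi⟩
    have hdisj : Disjoint (Finset.univ.filter (fun u => J.cl u = j))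
        ((nbr J j).biUnion (fun i => upSet J i j)) := by
      rw [Finset.disjoint_left]
      intro u hu hu'
      rw [Finset.mem_biUnion] at hu'
      obtain ⟨i, hi, hui⟩ := hu'
      exact cl_ne_of_mem_upSet (mem_nbr.mp hi) hui (Finset.mem_filter.mp hu).2
    have hpd : (↑(nbr J j) : Set I).PairwiseDisjoint (fun i => upSet J i j) := by
      intro i hi i' hi' hne
      exact upSet_disjoint (mem_nbr.mp hi) (mem_nbr.mp hi') hne
    conv_lhs => rw [hset]
    rw [Finset.prod_union hdisj, Finset.prod_biUnion hpd]
  have hQ : ∀ z : ∀ u, D u,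
      (∀ v ∈ J.C j, z v = x v)
        ↔ (∀ v, v ∉ (nbr J j).biUnion (fun i => upSet J i j \ sep J i j) → z v = x v) :=
    fun z => ⟨fun h v hv => h v (notin_biUnion_iff.mp hv),
      fun h v hv => h v (notin_biUnion_iff.mpr hv)⟩
  have hpot : ∀ z : ∀ u, D u, (∀ v ∈ J.C j, z v = x v) →
      (∏ u ∈ Finset.univ.filter (fun u => J.cl u = j), K u z) = pot J K j x := by
    intro z hz
    refine Finset.prod_congr rfl fun u hu => hKloc u z x fun v hv => ?_
    exact hz v ((Finset.mem_filter.mp hu).2 ▸ J.cover u hv)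
  have hstep : ∀ z : ∀ u, D u,
      (if ∀ v ∈ J.C j, z v = x v then ∏ u : U, K u z else 0)
      = pot J K j x * (if ∀ v, v ∉ (nbr J j).biUnion (fun i => upSet J i j \ sep J i j) → z v = x v
          then ∏ i ∈ nbr J j, ∏ u ∈ upSet J i j, K u z else 0) := by
    intro z
    by_cases hz : ∀ v ∈ J.C j, z v = x v
    · rw [if_pos hz, if_pos ((hQ z).mp hz), hpart z, hpot z hz]
    · rw [if_neg hz, if_neg (fun h => hz ((hQ z).mpr h)), mul_zero]
  show (∑ z : ∀ u, D u, if ∀ v ∈ J.C j, z v = x v then ∏ u : U, K u z else 0) = _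
  rw [Finset.sum_congr rfl fun z _ => hstep z, ← Finset.mul_sum,
    msg_prod K hKloc j x (nbr J j) (Finset.Subset.refl _)]


end Main
end

section
/- The junction-tree messages satisfy the belief-propagation recursion: for every tree edge j–k, M_{j→k}(X_{S_{jk}}) = ∑_{X_{C_j \ S_{jk}}} Φ_j(X_{C_j}) ∏_{i ∈ n(j), i ≠ k} M_{i→j}(X_{S_{ij}}). -/
open Finset
open scoped Classical

/-! ### Auxiliary lemmas: sums over constrained assignments -/

section Sums

variable {U : Type} [Fintype U] [DecidableEq U] {D : U → Type}
  [∀ u, Fintype (D u)] [∀ u, DecidableEq (D u)]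

/-- Summing over assignments free on `A ∪ B` splits as a double sum when `A` and `B`
are disjoint. -/
lemma sum_agree_split (A B : Finset U) (hAB : Disjoint A B)
    (f : (∀ u, D u) → ℝ) (x : ∀ u, D u) :
    (∑ z : ∀ u, D u, if ∀ v, v ∉ A ∪ B → z v = x v then f z else 0)
    = ∑ z : ∀ u, D u, if ∀ v, v ∉ A → z v = x v then
        (∑ w : ∀ u, D u, if ∀ v, v ∉ B → w v = z v then f w else 0) else 0 := by
  rw [eq_comm]
  have hpush : ∀ z : ∀ u, D u,
      (if ∀ v, v ∉ A → z v = x v then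
        (∑ w : ∀ u, D u, if ∀ v, v ∉ B → w v = z v then f w else 0) else 0)
      = ∑ w : ∀ u, D u,
          if (∀ v, v ∉ A → z v = x v) ∧ (∀ v, v ∉ B → w v = z v) then f w else 0 := by
    intro z
    by_cases h : ∀ v, v ∉ A → z v = x v
    · rw [if_pos h]
      exact Finset.sum_congr rfl fun w _ => (if_congr (and_iff_right h) rfl rfl).symm
    · rw [if_neg h]
      symm
      exact Finset.sum_eq_zero fun w _ => by rw [if_neg fun hc => h hc.1]
  simp_rw [hpush]
  rw [Finset.sum_comm]
  refine Finset.sum_congr rfl fun w _ => ?_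
  by_cases hR : ∀ v, v ∉ A ∪ B → w v = x v
  · rw [if_pos hR]
    have hiff : ∀ z : ∀ u, D u,
        ((∀ v, v ∉ A → z v = x v) ∧ (∀ v, v ∉ B → w v = z v)) ↔
          z = (fun v => if v ∈ A then w v else x v) := by
      intro z
      constructor
      · rintro ⟨h1, h2⟩
        funext v
        by_cases hv : v ∈ A
        · have hvB : v ∉ B := Finset.disjoint_left.mp hAB hv
          simp [hv, (h2 v hvB).symm]
        · simp [hv, h1 v hv]
      · rintro rfl
        refine ⟨fun v hv => by simp [hv], fun v hvB => ?_⟩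
        by_cases hv : v ∈ A
        · simp [hv]
        · have : v ∉ A ∪ B := by simp [hv, hvB]
          simp [hv, hR v this]
    calc (∑ z : ∀ u, D u,
            if (∀ v, v ∉ A → z v = x v) ∧ (∀ v, v ∉ B → w v = z v) then f w else 0)
        = ∑ z : ∀ u, D u,
            if z = (fun v => if v ∈ A then w v else x v) then f w else 0 :=
          Finset.sum_congr rfl fun z _ => by rw [if_congr (hiff z) rfl rfl]
      _ = f w := Fintype.sum_ite_eq' _ _
  · rw [if_neg hR]
    refine Finset.sum_eq_zero fun z _ => ?_
    rw [if_neg]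
    rintro ⟨h1, h2⟩
    refine hR fun v hv => ?_
    have hvA : v ∉ A := fun h => hv (Finset.mem_union_left _ h)
    have hvB : v ∉ B := fun h => hv (Finset.mem_union_right _ h)
    rw [h2 v hvB, h1 v hvA]

/-- Changing the base point off the irrelevant coordinates `A` does not change a
constrained sum of a function not depending on `A`. -/
lemma sum_agree_base_congr (A B : Finset U) (hAB : Disjoint A B)
    (g : (∀ u, D u) → ℝ)
    (hg : ∀ w w' : ∀ u, D u, (∀ v, v ∉ A → w v = w' v) → g w = g w')
    (z z' : ∀ u, D u) (hz : ∀ v, v ∉ A → z v = z' v) :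
    (∑ w : ∀ u, D u, if ∀ v, v ∉ B → w v = z v then g w else 0)
    = ∑ w : ∀ u, D u, if ∀ v, v ∉ B → w v = z' v then g w else 0 := by
  rw [← Finset.sum_filter, ← Finset.sum_filter]
  refine Finset.sum_nbij' (i := fun w => fun v => if v ∈ A then z' v else w v)
    (j := fun w => fun v => if v ∈ A then z v else w v) ?_ ?_ ?_ ?_ ?_
  · intro w hw
    simp only [Finset.mem_filter, Finset.mem_univ, true_and] at hw ⊢
    intro v hv
    by_cases hvA : v ∈ A
    · simp [hvA]
    · simp [hvA, hw v hv, hz v hvA]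
  · intro w hw
    simp only [Finset.mem_filter, Finset.mem_univ, true_and] at hw ⊢
    intro v hv
    by_cases hvA : v ∈ A
    · simp [hvA]
    · simp [hvA, hw v hv, (hz v hvA).symm]
  · intro w hw
    simp only [Finset.mem_filter, Finset.mem_univ, true_and] at hw
    funext v
    by_cases hvA : v ∈ A
    · have hvB : v ∉ B := Finset.disjoint_left.mp hAB hvA
      simp [hvA, hw v hvB]
    · simp [hvA]
  · intro w hw
    simp only [Finset.mem_filter, Finset.mem_univ, true_and] at hw
    funext v
    by_cases hvA : v ∈ A
    · have hvB : v ∉ B := Finset.disjoint_left.mp hAB hvA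
      simp [hvA, hw v hvB]
    · simp [hvA]
  · intro w _
    refine hg _ _ fun v hv => ?_
    simp [hv]

lemma sum_agree_empty (f : (∀ u, D u) → ℝ) (z : ∀ u, D u) :
    (∑ w : ∀ u, D u, if ∀ v, v ∉ (∅ : Finset U) → w v = z v then f w else 0) = f z := by
  have h : ∀ w : ∀ u, D u, (∀ v, v ∉ (∅ : Finset U) → w v = z v) ↔ w = z := by
    intro w
    simp [funext_iff]
  calc (∑ w : ∀ u, D u, if ∀ v, v ∉ (∅ : Finset U) → w v = z v then f w else 0)
      = ∑ w : ∀ u, D u, if w = z then f w else 0 :=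
        Finset.sum_congr rfl fun w _ => by rw [if_congr (h w) rfl rfl]
    _ = f z := Fintype.sum_ite_eq' _ _

/-- Factorization of a constrained sum of a product over disjoint blocks, each factor
depending only on coordinates away from the other blocks. -/
lemma sum_agree_prod_split {ι : Type*} [DecidableEq ι] (s : Finset ι) :
    ∀ (V : ι → Finset U) (h : ι → (∀ u, D u) → ℝ),
    (∀ i ∈ s, ∀ i' ∈ s, i ≠ i' → Disjoint (V i) (V i')) →
    (∀ i ∈ s, ∀ w w' : ∀ u, D u,
      (∀ v, (∀ i' ∈ s, i' ≠ i → v ∉ V i') → w v = w' v) → h i w = h i w') →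
    ∀ z : ∀ u, D u,
    (∑ w : ∀ u, D u, if ∀ v, v ∉ s.biUnion V → w v = z v then ∏ i ∈ s, h i w else 0)
    = ∏ i ∈ s, ∑ w : ∀ u, D u, if ∀ v, v ∉ V i → w v = z v then h i w else 0 := by
  induction s using Finset.induction_on with
  | empty =>
    intro V h _ _ z
    simpa using sum_agree_empty (fun _ => (1 : ℝ)) z
  | @insert a s' ha ih =>
    intro V h hdisj hdep z
    have haS : a ∈ insert a s' := Finset.mem_insert_self a s'
    have hsub : ∀ i ∈ s', i ∈ insert a s' := fun i hi => Finset.mem_insert_of_mem hi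
    have hBU : (insert a s').biUnion V = V a ∪ s'.biUnion V := by
      exact Finset.biUnion_insert
    have hdAB : Disjoint (V a) (s'.biUnion V) := by
      rw [Finset.disjoint_biUnion_right]
      intro i hi
      exact hdisj a haS i (hsub i hi) (fun hai => ha (hai ▸ hi))
    rw [hBU, sum_agree_split (V a) (s'.biUnion V) hdAB _ z]
    rw [Finset.prod_insert ha]
    have key : ∀ z' : ∀ u, D u, (∀ v, v ∉ V a → z' v = z v) →
        (∑ w : ∀ u, D u, if ∀ v, v ∉ s'.biUnion V → w v = z' v
          then ∏ i ∈ insert a s', h i w else 0)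
        = h a z' * ∏ i ∈ s',
            (∑ w : ∀ u, D u, if ∀ v, v ∉ V i → w v = z v then h i w else 0) := by
      intro z' hz'
      have step1 : (∑ w : ∀ u, D u, if ∀ v, v ∉ s'.biUnion V → w v = z' v
            then ∏ i ∈ insert a s', h i w else 0)
          = h a z' * (∑ w : ∀ u, D u, if ∀ v, v ∉ s'.biUnion V → w v = z' v
            then ∏ i ∈ s', h i w else 0) := by
        rw [Finset.mul_sum]
        refine Finset.sum_congr rfl fun w _ => ?_
        by_cases hw : ∀ v, v ∉ s'.biUnion V → w v = z' v
        · rw [if_pos hw, if_pos hw, Finset.prod_insert ha]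
          have : h a w = h a z' := by
            refine hdep a haS w z' fun v hv => ?_
            refine hw v fun hvB => ?_
            rw [Finset.mem_biUnion] at hvB
            obtain ⟨i, hi, hvi⟩ := hvB
            exact hv i (hsub i hi) (fun hia => ha (hia ▸ hi)) hvi
          rw [this]
        · rw [if_neg hw, if_neg hw, mul_zero]
      rw [step1]
      congr 1
      have hdisj' : ∀ i ∈ s', ∀ i' ∈ s', i ≠ i' → Disjoint (V i) (V i') :=
        fun i hi i' hi' hne => hdisj i (hsub i hi) i' (hsub i' hi') hne
      have hdep' : ∀ i ∈ s', ∀ w w' : ∀ u, D u,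
          (∀ v, (∀ i' ∈ s', i' ≠ i → v ∉ V i') → w v = w' v) → h i w = h i w' := by
        intro i hi w w' hag
        refine hdep i (hsub i hi) w w' fun v hv => ?_
        exact hag v fun i' hi' hne => hv i' (hsub i' hi') hne
      rw [ih V h hdisj' hdep' z']
      refine Finset.prod_congr rfl fun i hi => ?_
      refine sum_agree_base_congr (V a) (V i) ?_ (h i) ?_ z' z ?_
      · exact hdisj a haS i (hsub i hi) (fun hai => ha (hai ▸ hi))
      · intro w w' hag
        refine hdep i (hsub i hi) w w' fun v hv => ?_
        exact hag v (hv a haS (fun hia => ha (hia ▸ hi)))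
      · exact fun v hv => hz' v hv
    calc (∑ z' : ∀ u, D u, if ∀ v, v ∉ V a → z' v = z v then
            (∑ w : ∀ u, D u, if ∀ v, v ∉ s'.biUnion V → w v = z' v
              then ∏ i ∈ insert a s', h i w else 0) else 0)
        = ∑ z' : ∀ u, D u, if ∀ v, v ∉ V a → z' v = z v then
            h a z' * ∏ i ∈ s',
              (∑ w : ∀ u, D u, if ∀ v, v ∉ V i → w v = z v then h i w else 0) else 0 := by
          refine Finset.sum_congr rfl fun z' _ => ?_
          by_cases hz' : ∀ v, v ∉ V a → z' v = z v
          · rw [if_pos hz', if_pos hz', key z' hz']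
          · rw [if_neg hz', if_neg hz']
      _ = (∑ z' : ∀ u, D u, if ∀ v, v ∉ V a → z' v = z v then h a z' else 0) *
            ∏ i ∈ s',
              (∑ w : ∀ u, D u, if ∀ v, v ∉ V i → w v = z v then h i w else 0) := by
          rw [Finset.sum_mul]
          refine Finset.sum_congr rfl fun z' _ => ?_
          by_cases hz' : ∀ v, v ∉ V a → z' v = z v
          · rw [if_pos hz', if_pos hz']
          · rw [if_neg hz', if_neg hz', zero_mul]

end Sums

/-! ### Auxiliary lemmas: junction-tree combinatorics -/

section Tree

variable {U I : Type} [Fintype U] [DecidableEq U] [Fintype I] (J : JT U I)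

lemma jt_existsUnique (a b : I) : ∃! p : J.G.Walk a b, p.IsPath :=
  ((SimpleGraph.isTree_iff_existsUnique_path.mp J.tree).2) a b

lemma jt_walk_eq {a b : I} {p q : J.G.Walk a b} (hp : p.IsPath) (hq : q.IsPath) :
    p = q :=
  ((jt_existsUnique J a b).unique hp hq)

/-- A vertex adjacent to the endpoint lying on a path is the penultimate vertex. -/
lemma jt_pen {a j i : I} (p : J.G.Walk a j) (hp : p.IsPath) (hi : i ∈ p.support)
    (hij : J.G.Adj i j) : p = (p.takeUntil i hi).concat hij := by
  have h1 : (p.dropUntil i hi).IsPath := hp.dropUntil hi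
  have h2 : (SimpleGraph.Walk.cons hij SimpleGraph.Walk.nil : J.G.Walk i j).IsPath := by
    simp [SimpleGraph.Walk.isPath_def, hij.ne]
  have h3 : p.dropUntil i hi = SimpleGraph.Walk.cons hij SimpleGraph.Walk.nil :=
    jt_walk_eq J h1 h2
  calc p = (p.takeUntil i hi).append (p.dropUntil i hi) :=
        (SimpleGraph.Walk.take_spec p hi).symm
    _ = (p.takeUntil i hi).concat hij := by rw [h3]; rfl

/-- Two vertices on a path that are both adjacent to the endpoint coincide. -/
lemma jt_pen_unique {a j i i' : I} (p : J.G.Walk a j) (hp : p.IsPath)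
    (hi : i ∈ p.support) (hi' : i' ∈ p.support)
    (hij : J.G.Adj i j) (hi'j : J.G.Adj i' j) : i = i' := by
  have e1 := jt_pen J p hp hi hij
  have e2 := jt_pen J p hp hi' hi'j
  have s1 : p.support = (p.takeUntil i hi).support ++ [j] := by
    conv_lhs => rw [e1]
    rw [SimpleGraph.Walk.support_concat]
  have s2 : p.support = (p.takeUntil i' hi').support ++ [j] := by
    conv_lhs => rw [e2]
    rw [SimpleGraph.Walk.support_concat]
  have t : (p.takeUntil i hi).support = (p.takeUntil i' hi').support :=
    List.append_cancel_right (s1.symm.trans s2)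
  have r : (p.takeUntil i hi).reverse.support = (p.takeUntil i' hi').reverse.support := by
    rw [SimpleGraph.Walk.support_reverse, SimpleGraph.Walk.support_reverse, t]
  rw [SimpleGraph.Walk.support_eq_cons ((p.takeUntil i hi).reverse),
    SimpleGraph.Walk.support_eq_cons ((p.takeUntil i' hi').reverse)] at r
  have := congrArg List.head? r
  simpa using this

lemma mem_upSet_iff {u : U} {i j : I} (p : J.G.Walk (J.cl u) j) (hp : p.IsPath) :
    u ∈ upSet J i j ↔ i ∈ p.support := by
  simp only [upSet, Finset.mem_filter, Finset.mem_univ, true_and]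
  constructor
  · rintro ⟨pth, h⟩
    rwa [jt_walk_eq J pth.2 hp] at h
  · intro h
    exact ⟨⟨p, hp⟩, h⟩

lemma concat_isPath {a b c : I} {p : J.G.Walk a b} (hp : p.IsPath)
    (h : J.G.Adj b c) (hc : c ∉ p.support) : (p.concat h).IsPath := by
  rw [SimpleGraph.Walk.isPath_def, SimpleGraph.Walk.support_concat]
  rw [← List.concat_eq_append]; exact hp.support_nodup.concat hc

variable {j k : I}

/-- variables assigned to `j` are upstream of the edge j–k. -/
lemma cl_mem_upSet (hjk : J.G.Adj j k) {u : U} (hcl : J.cl u = j) : u ∈ upSet J j k := by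
  subst hcl
  have hpath : (SimpleGraph.Walk.cons hjk SimpleGraph.Walk.nil :
      J.G.Walk (J.cl u) k).IsPath := by
    simp [SimpleGraph.Walk.isPath_def, hjk.ne]
  rw [mem_upSet_iff J _ hpath]
  simp

/-- variables assigned to `j` are not upstream of any edge i–j. -/
lemma cl_not_mem_upSet {u : U} {i : I} (hij : J.G.Adj i j) (hcl : J.cl u = j) :
    u ∉ upSet J i j := by
  subst hcl
  rw [mem_upSet_iff J (SimpleGraph.Walk.nil : J.G.Walk (J.cl u) (J.cl u))
    SimpleGraph.Walk.IsPath.nil]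
  simp only [SimpleGraph.Walk.support_nil, List.mem_cons, List.not_mem_nil, or_false]
  exact hij.ne

/-- a branch upstream set is contained in the upstream set of the edge j–k. -/
lemma upSet_branch_subset (hjk : J.G.Adj j k) {i : I} (hij : J.G.Adj i j) (hik : i ≠ k) :
    upSet J i j ⊆ upSet J j k := by
  intro u hu
  obtain ⟨p, hp, -⟩ := jt_existsUnique J (J.cl u) j
  have hi : i ∈ p.support := (mem_upSet_iff J p hp).mp hu
  have hknot : k ∉ p.support := by
    intro hk
    exact hik (jt_pen_unique J p hp hi hk hij hjk.symm)
  have hq : (p.concat hjk).IsPath := concat_isPath J hp hjk hknot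
  rw [mem_upSet_iff J (p.concat hjk) hq]
  rw [SimpleGraph.Walk.support_concat]
  exact List.mem_append_left _ p.end_mem_support

/-- every variable upstream of j–k is either assigned to `j` or upstream of some branch. -/
lemma upSet_cases (hjk : J.G.Adj j k) {u : U} (hu : u ∈ upSet J j k) :
    J.cl u = j ∨ ∃ i, J.G.Adj i j ∧ i ≠ k ∧ u ∈ upSet J i j := by
  obtain ⟨p, hp, -⟩ := jt_existsUnique J (J.cl u) k
  have hj : j ∈ p.support := (mem_upSet_iff J p hp).mp hu
  by_cases hcl : J.cl u = j
  · exact Or.inl hcl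
  · right
    set q := p.takeUntil j hj with hqdef
    have hq : q.IsPath := hp.takeUntil hj
    have hqne : j ≠ J.cl u := fun h => hcl h.symm
    obtain ⟨i, hji, r, hr⟩ := q.reverse.exists_eq_cons_of_ne hqne
    have hir : i ∈ q.reverse.support := by
      rw [hr]
      simp only [SimpleGraph.Walk.support_cons, List.mem_cons]
      exact Or.inr r.start_mem_support
    have hiq : i ∈ q.support := by
      rwa [SimpleGraph.Walk.support_reverse, List.mem_reverse] at hir
    have hknotq : k ∉ q.support := by
      have hd : (p.dropUntil j hj).IsPath := hp.dropUntil hj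
      have hspec := SimpleGraph.Walk.take_spec p hj
      have hsupp : p.support = q.support ++ (p.dropUntil j hj).support.tail := by
        conv_lhs => rw [← hspec]
        rw [SimpleGraph.Walk.support_append]
      have hdrop : p.dropUntil j hj = SimpleGraph.Walk.cons hjk SimpleGraph.Walk.nil :=
        jt_walk_eq J hd (by simp [SimpleGraph.Walk.isPath_def, hjk.ne])
      rw [hdrop] at hsupp
      simp only [SimpleGraph.Walk.support_cons, SimpleGraph.Walk.support_nil] at hsupp
      have hnodup := hp.support_nodup
      rw [hsupp] at hnodup
      intro hkq
      have := (List.nodup_append.mp hnodup).2.2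
      exact this k hkq k (by simp) rfl
    refine ⟨i, hji.symm, fun h => hknotq (h ▸ hiq), ?_⟩
    rw [mem_upSet_iff J q hq]
    exact hiq

/-- a variable of `C j` that is upstream of edge i–j lies in `C i`. -/
lemma upSet_inter_C {u : U} {i : I} (hij : J.G.Adj i j) (hu : u ∈ upSet J i j)
    (hCj : u ∈ J.C j) : u ∈ J.C i := by
  obtain ⟨p, hp, -⟩ := jt_existsUnique J (J.cl u) j
  have hi : i ∈ p.support := (mem_upSet_iff J p hp).mp hu
  have hself : u ∈ J.C (J.cl u) := J.cover u (Finset.mem_insert_self u (J.pa u))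
  exact J.runInter (J.cl u) j ⟨p, hp⟩ i hi (Finset.mem_inter.mpr ⟨hself, hCj⟩)

/-- distinct branches have disjoint upstream sets. -/
lemma upSet_branches_disjoint {i i' : I} (hij : J.G.Adj i j) (hi'j : J.G.Adj i' j)
    (hne : i ≠ i') : Disjoint (upSet J i j) (upSet J i' j) := by
  rw [Finset.disjoint_left]
  intro u hu hu'
  obtain ⟨p, hp, -⟩ := jt_existsUnique J (J.cl u) j
  have hi : i ∈ p.support := (mem_upSet_iff J p hp).mp hu
  have hi' : i' ∈ p.support := (mem_upSet_iff J p hp).mp hu'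
  exact hne (jt_pen_unique J p hp hi hi' hij hi'j)

/-- the cluster `C j` minus the separator is upstream of the edge j–k. -/
lemma C_sdiff_subset_upSet (hjk : J.G.Adj j k) : J.C j \ sep J j k ⊆ upSet J j k := by
  intro u hu
  rw [Finset.mem_sdiff] at hu
  obtain ⟨hCj, hS⟩ := hu
  obtain ⟨p, hp, -⟩ := jt_existsUnique J (J.cl u) k
  by_contra hnot
  have hj : j ∉ p.support := fun h => hnot ((mem_upSet_iff J p hp).mpr h)
  have hw : (p.concat hjk.symm).IsPath := concat_isPath J hp hjk.symm hj
  have hk : k ∈ (p.concat hjk.symm).support := by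
    rw [SimpleGraph.Walk.support_concat]
    exact List.mem_append_left _ p.end_mem_support
  have hself : u ∈ J.C (J.cl u) := J.cover u (Finset.mem_insert_self u (J.pa u))
  have hCk : u ∈ J.C k :=
    J.runInter (J.cl u) j ⟨p.concat hjk.symm, hw⟩ k hk (Finset.mem_inter.mpr ⟨hself, hCj⟩)
  exact hS (Finset.mem_inter.mpr ⟨hCj, hCk⟩)

/-- the family of a variable upstream of i–j stays within the branch or the separator. -/
lemma fa_subset_branch {u : U} {i : I} (hij : J.G.Adj i j) (hu : u ∈ upSet J i j) :
    insert u (J.pa u) ⊆ upSet J i j ∪ sep J i j := by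
  intro v hv
  by_cases hvB : v ∈ upSet J i j
  · exact Finset.mem_union_left _ hvB
  · refine Finset.mem_union_right _ ?_
    obtain ⟨pu, hpu, -⟩ := jt_existsUnique J (J.cl u) j
    have hipu : i ∈ pu.support := (mem_upSet_iff J pu hpu).mp hu
    obtain ⟨pv, hpv, -⟩ := jt_existsUnique J (J.cl v) j
    have hipv : i ∉ pv.support := fun h => hvB ((mem_upSet_iff J pv hpv).mpr h)
    have hvCu : v ∈ J.C (J.cl u) := J.cover u hv
    have hvCv : v ∈ J.C (J.cl v) := J.cover v (Finset.mem_insert_self v (J.pa v))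
    obtain ⟨r, hr, -⟩ := jt_existsUnique J (J.cl v) (J.cl u)
    -- i lies on the path r from cl v to cl u
    have hir : i ∈ r.support := by
      have hw : (r.reverse.append pv).IsPath → True := fun _ => trivial
      set w' : J.G.Walk (J.cl u) j := r.reverse.append pv with hw'
      have hbp : w'.bypass.IsPath := SimpleGraph.Walk.bypass_isPath w'
      have hpu_eq : pu = w'.bypass := jt_walk_eq J hpu hbp
      have hiw : i ∈ w'.support := by
        have : i ∈ w'.bypass.support := hpu_eq ▸ hipu
        exact SimpleGraph.Walk.support_bypass_subset w' this
      rw [hw', SimpleGraph.Walk.mem_support_append_iff] at hiw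
      rcases hiw with h | h
      · rwa [SimpleGraph.Walk.support_reverse, List.mem_reverse] at h
      · exact absurd h hipv
    have hvCi : v ∈ J.C i :=
      J.runInter (J.cl v) (J.cl u) ⟨r, hr⟩ i hir (Finset.mem_inter.mpr ⟨hvCv, hvCu⟩)
    have hπ : (pv.concat hij.symm).IsPath := concat_isPath J hpv hij.symm hipv
    have hjπ : j ∈ (pv.concat hij.symm).support := by
      rw [SimpleGraph.Walk.support_concat]
      exact List.mem_append_left _ pv.end_mem_support
    have hvCj : v ∈ J.C j :=
      J.runInter (J.cl v) i ⟨pv.concat hij.symm, hπ⟩ j hjπ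
        (Finset.mem_inter.mpr ⟨hvCv, hvCi⟩)
    exact Finset.mem_inter.mpr ⟨hvCi, hvCj⟩

end Tree

/-- Belief-propagation recursion for the messages:
M_{j→k}(X_{S_jk}) = ∑_{X_{C_j \ S_jk}} Φ_j(X_{C_j}) ∏_{i ∈ n(j), i ≠ k} M_{i→j}(X_{S_ij}). -/
theorem jt_message_recursion {U I : Type} [Fintype U] [DecidableEq U] [Fintype I]
    (J : JT U I) {D : U → Type} [∀ u, Fintype (D u)] [∀ u, DecidableEq (D u)]
    (cpd : (u : U) → (∀ v, D v) → ℝ) (ev : (u : U) → Finset (D u))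
    (K : (u : U) → (∀ v, D v) → ℝ)
    (hK : ∀ u x, K u x = (if x u ∈ ev u then (1 : ℝ) else 0) * cpd u x)
    (hloc : ∀ u x x', (∀ v ∈ insert u (J.pa u), x v = x' v) → cpd u x = cpd u x')
    (j k : I) (hjk : J.G.Adj j k) (x : ∀ u, D u) :
    msg J K j k x =
      ∑ z : ∀ u, D u,
        if ∀ v, v ∉ J.C j \ sep J j k → z v = x v
        then pot J K j z * ∏ i ∈ (nbr J j).erase k, msg J K i j z else 0 := by
  classical
  -- dependence of K u on the family of u
  have Kdep : ∀ (u : U) (w w' : ∀ v, D v),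
      (∀ v ∈ insert u (J.pa u), w v = w' v) → K u w = K u w' := by
    intro u w w' hag
    rw [hK, hK, hag u (Finset.mem_insert_self u (J.pa u)), hloc u w w' hag]
  set s : Finset I := (nbr J j).erase k with hs
  have hmem_s : ∀ i, i ∈ s ↔ J.G.Adj i j ∧ i ≠ k := by
    intro i
    simp only [hs, nbr, Finset.mem_erase, Finset.mem_filter, Finset.mem_univ, true_and]
    tauto
  set S : Finset U := sep J j k with hS
  set Vb : I → Finset U := fun i => upSet J i j \ sep J i j with hVb
  set Bi : I → Finset U := fun i => upSet J i j with hBi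
  set Aj : Finset U := Finset.univ.filter (fun u => J.cl u = j) with hAj
  -- basic disjointness facts
  have hVbCj : ∀ i, J.G.Adj i j → ∀ u ∈ Vb i, u ∉ J.C j := by
    intro i hij u hu hCj
    rw [hVb, Finset.mem_sdiff] at hu
    exact hu.2 (Finset.mem_inter.mpr ⟨upSet_inter_C J hij hu.1 hCj, hCj⟩)
  -- partition of the eliminated variables
  have key1 : upSet J j k \ S = (J.C j \ S) ∪ s.biUnion Vb := by
    ext u
    simp only [Finset.mem_sdiff, Finset.mem_union, Finset.mem_biUnion]
    constructor
    · rintro ⟨hu, hnS⟩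
      rcases upSet_cases J hjk hu with hcl | ⟨i, hij, hik, hB⟩
      · exact Or.inl ⟨hcl ▸ J.cover u (Finset.mem_insert_self u (J.pa u)), hnS⟩
      · by_cases hsep : u ∈ sep J i j
        · exact Or.inl ⟨Finset.mem_of_mem_inter_right hsep, hnS⟩
        · exact Or.inr ⟨i, (hmem_s i).mpr ⟨hij, hik⟩, by
            rw [hVb]; exact Finset.mem_sdiff.mpr ⟨hB, hsep⟩⟩
    · rintro (⟨hCj, hnS⟩ | ⟨i, hi, hVbi⟩)
      · exact ⟨C_sdiff_subset_upSet J hjk (Finset.mem_sdiff.mpr ⟨hCj, hnS⟩), hnS⟩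
      · obtain ⟨hij, hik⟩ := (hmem_s i).mp hi
        rw [hVb, Finset.mem_sdiff] at hVbi
        refine ⟨upSet_branch_subset J hjk hij hik hVbi.1, fun hmS => ?_⟩
        have hCj : u ∈ J.C j := Finset.mem_of_mem_inter_left hmS
        exact hVbi.2 (Finset.mem_inter.mpr ⟨upSet_inter_C J hij hVbi.1 hCj, hCj⟩)
  have hdisj1 : Disjoint (J.C j \ S) (s.biUnion Vb) := by
    rw [Finset.disjoint_left]
    intro u hu hub
    rw [Finset.mem_biUnion] at hub
    obtain ⟨i, hi, hVbi⟩ := hub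
    exact hVbCj i ((hmem_s i).mp hi).1 u hVbi (Finset.mem_sdiff.mp hu).1
  -- partition of the upstream factors
  have key2 : upSet J j k = Aj ∪ s.biUnion Bi := by
    ext u
    simp only [Finset.mem_union, Finset.mem_biUnion, hAj, Finset.mem_filter,
      Finset.mem_univ, true_and]
    constructor
    · intro hu
      rcases upSet_cases J hjk hu with hcl | ⟨i, hij, hik, hB⟩
      · exact Or.inl hcl
      · exact Or.inr ⟨i, (hmem_s i).mpr ⟨hij, hik⟩, hB⟩
    · rintro (hcl | ⟨i, hi, hB⟩)
      · exact cl_mem_upSet J hjk hcl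
      · obtain ⟨hij, hik⟩ := (hmem_s i).mp hi
        exact upSet_branch_subset J hjk hij hik hB
  have hdisj2 : Disjoint Aj (s.biUnion Bi) := by
    rw [Finset.disjoint_left]
    intro u hu hub
    rw [hAj, Finset.mem_filter] at hu
    rw [Finset.mem_biUnion] at hub
    obtain ⟨i, hi, hB⟩ := hub
    exact cl_not_mem_upSet J ((hmem_s i).mp hi).1 hu.2 hB
  have hpair : (s : Set I).PairwiseDisjoint Bi := by
    intro i hi i' hi' hne
    simp only [Finset.coe_mem, Finset.mem_coe] at hi hi'
    exact upSet_branches_disjoint J ((hmem_s i).mp hi).1 ((hmem_s i').mp hi').1 hne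
  -- dependence of the potential on C j
  have potdep : ∀ w z : ∀ v, D v, (∀ v ∈ J.C j, w v = z v) →
      pot J K j w = pot J K j z := by
    intro w z hag
    refine Finset.prod_congr rfl fun u hu => ?_
    rw [Finset.mem_filter] at hu
    exact Kdep u w z fun v hv => hag v (hu.2 ▸ J.cover u hv)
  -- the branch factors
  set h : I → (∀ v, D v) → ℝ := fun i w => ∏ u ∈ upSet J i j, K u w with hh
  have hdisjVb : ∀ i ∈ s, ∀ i' ∈ s, i ≠ i' → Disjoint (Vb i) (Vb i') := by
    intro i hi i' hi' hne
    exact Finset.disjoint_of_subset_left (Finset.sdiff_subset)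
      (Finset.disjoint_of_subset_right (Finset.sdiff_subset)
        (upSet_branches_disjoint J ((hmem_s i).mp hi).1 ((hmem_s i').mp hi').1 hne))
  have hdepVb : ∀ i ∈ s, ∀ w w' : ∀ v, D v,
      (∀ v, (∀ i' ∈ s, i' ≠ i → v ∉ Vb i') → w v = w' v) → h i w = h i w' := by
    intro i hi w w' hag
    obtain ⟨hij, hik⟩ := (hmem_s i).mp hi
    refine Finset.prod_congr rfl fun u hu => ?_
    refine Kdep u w w' fun v hv => ?_
    have hvmem : v ∈ upSet J i j ∪ sep J i j := fa_subset_branch J hij hu hv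
    refine hag v fun i' hi' hne => ?_
    obtain ⟨hi'j, hi'k⟩ := (hmem_s i').mp hi'
    intro hvVb
    rcases Finset.mem_union.mp hvmem with hvB | hvS
    · exact Finset.disjoint_left.mp
        (upSet_branches_disjoint J hi'j hij hne) ((Finset.mem_sdiff.mp hvVb).1) hvB
    · exact hVbCj i' hi'j v hvVb (Finset.mem_of_mem_inter_right hvS)
  -- now the computation
  show (∑ z : ∀ v, D v,
      if ∀ v, v ∉ upSet J j k \ sep J j k → z v = x v
      then ∏ u ∈ upSet J j k, K u z else 0) = _
  rw [show upSet J j k \ sep J j k = (J.C j \ S) ∪ s.biUnion Vb from key1]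
  rw [sum_agree_split (J.C j \ S) (s.biUnion Vb) hdisj1 _ x]
  refine Finset.sum_congr rfl fun z _ => ?_
  by_cases hz : ∀ v, v ∉ J.C j \ S → z v = x v
  · rw [if_pos hz, if_pos (by exact hz)]
    -- inner sum equals pot * product of messages
    have step1 : (∑ w : ∀ v, D v,
        if ∀ v, v ∉ s.biUnion Vb → w v = z v then ∏ u ∈ upSet J j k, K u w else 0)
        = ∑ w : ∀ v, D v,
          if ∀ v, v ∉ s.biUnion Vb → w v = z v
          then pot J K j z * ∏ i ∈ s, h i w else 0 := by
      refine Finset.sum_congr rfl fun w _ => ?_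
      by_cases hw : ∀ v, v ∉ s.biUnion Vb → w v = z v
      · rw [if_pos hw, if_pos hw]
        rw [key2, Finset.prod_union hdisj2, Finset.prod_biUnion hpair]
        congr 1
        refine potdep w z fun v hv => ?_
        refine hw v fun hvb => ?_
        rw [Finset.mem_biUnion] at hvb
        obtain ⟨i, hi, hvi⟩ := hvb
        exact hVbCj i ((hmem_s i).mp hi).1 v hvi hv
      · rw [if_neg hw, if_neg hw]
    rw [step1]
    have step2 : (∑ w : ∀ v, D v,
        if ∀ v, v ∉ s.biUnion Vb → w v = z v
        then pot J K j z * ∏ i ∈ s, h i w else 0)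
        = pot J K j z * ∑ w : ∀ v, D v,
            if ∀ v, v ∉ s.biUnion Vb → w v = z v then ∏ i ∈ s, h i w else 0 := by
      rw [Finset.mul_sum]
      refine Finset.sum_congr rfl fun w _ => ?_
      by_cases hw : ∀ v, v ∉ s.biUnion Vb → w v = z v
      · rw [if_pos hw, if_pos hw]
      · rw [if_neg hw, if_neg hw, mul_zero]
    rw [step2, sum_agree_prod_split s Vb h hdisjVb hdepVb z]
    rfl
  · rw [if_neg hz, if_neg (by exact hz)]
end

section
/- For every junction-tree edge j–k and every assignment with P(X_{S_{jk}}, E) > 0, the conditional distribution of the cluster given its separator and the evidence is P(X_{C_j} | X_{S_{jk}}, E) = Φ_j(X_{C_j}) · ∏_{i ∈ n(j), i ≠ k} M_{i→j}(X_{S_{ij}}) / M_{j→k}(X_{S_{jk}}). -/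
open Finset
open scoped Classical

namespace JTaux

open SimpleGraph Walk

variable {I : Type} {G : SimpleGraph I}

lemma path_unique (ht : G.IsTree) {a b : I} {p q : G.Walk a b} (hp : p.IsPath) (hq : q.IsPath) :
    p = q :=
  (ht.existsUnique_path a b).unique hp hq

/-- the endpoint does not lie in `takeUntil` at an interior vertex -/
lemma end_not_mem_takeUntil {a b c : I} {p : G.Walk a b} (hp : p.IsPath) (h : c ∈ p.support)
    (hne : c ≠ b) : b ∉ (p.takeUntil c h).support := by
  intro hb
  have hsplit := p.take_spec h
  have hnd : p.support.Nodup := hp.support_nodup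
  rw [← hsplit, Walk.support_append, List.nodup_append] at hnd
  have hb2 : b ∈ (p.dropUntil c h).support.tail :=
    Walk.end_mem_tail_support_of_ne hne _
  exact hnd.2.2 b hb b hb2 rfl

/-- disjointness of the two sides of an edge -/
lemma side_disjoint (ht : G.IsTree) {j k v : I} (hjk : G.Adj j k)
    (hp : ∃ p : G.Path v k, j ∈ p.1.support) (hq : ∃ q : G.Path v j, k ∈ q.1.support) : False := by
  obtain ⟨p, hj⟩ := hp
  obtain ⟨q, hk⟩ := hq
  have htu : (p.1.takeUntil j hj).IsPath := p.2.takeUntil hj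
  have hqe : p.1.takeUntil j hj = q.1 := path_unique ht htu q.2
  have hk' : k ∈ (p.1.takeUntil j hj).support := hqe ▸ hk
  exact end_not_mem_takeUntil p.2 hj hjk.ne hk'

/-- totality: every vertex is on one side of an edge -/
lemma side_total (ht : G.IsTree) {j k : I} (hjk : G.Adj j k) (v : I) :
    (∃ p : G.Path v k, j ∈ p.1.support) ∨ (∃ q : G.Path v j, k ∈ q.1.support) := by
  obtain ⟨p, hp, -⟩ := ht.existsUnique_path v k
  by_cases hj : j ∈ p.support
  · exact Or.inl ⟨⟨p, hp⟩, hj⟩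
  · right
    have hpath : (p.concat hjk.symm).IsPath := by
      rw [← isPath_reverse_iff, Walk.reverse_concat]
      rw [Walk.cons_isPath_iff]
      refine ⟨hp.reverse, ?_⟩
      rw [Walk.support_reverse]
      simpa using hj
    refine ⟨⟨p.concat hjk.symm, hpath⟩, ?_⟩
    rw [Walk.support_concat, List.mem_append]
    exact Or.inl p.end_mem_support

/-- in a tree, a path between adjacent vertices is the edge -/
lemma adj_path_eq_edge (ht : G.IsTree) {i j : I} (hij : G.Adj i j) {p : G.Walk i j}
    (hp : p.IsPath) : p = Walk.cons hij Walk.nil := by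
  refine path_unique ht hp ?_
  rw [Walk.cons_isPath_iff]
  constructor
  · exact Walk.IsPath.nil
  · simp [hij.ne]

/-- uniqueness of the penultimate vertex: two neighbors of the endpoint on a path to it agree -/
lemma penult_unique (ht : G.IsTree) {i i' j v : I} (hij : G.Adj i j) (hi'j : G.Adj i' j)
    {p : G.Walk v j} (hp : p.IsPath) (hi : i ∈ p.support) (hi' : i' ∈ p.support) : i = i' := by
  have key : ∀ {w : I}, (hwj : G.Adj w j) → (hw : w ∈ p.support) →
      p.support = (p.takeUntil w hw).support ++ [j] := by
    intro w hwj hw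
    have hdrop : p.dropUntil w hw = Walk.cons hwj Walk.nil :=
      adj_path_eq_edge ht hwj (hp.dropUntil hw)
    conv_lhs => rw [← p.take_spec hw]
    rw [Walk.support_append, hdrop]
    simp
  have h1 := key hij hi
  have h2 := key hi'j hi'
  have hsup : (p.takeUntil i hi).support = (p.takeUntil i' hi').support := by
    have := h1.symm.trans h2
    exact List.append_inj_left' this rfl
  have l1 : (p.takeUntil i hi).support.getLast (by simp) = i := Walk.getLast_support _
  have l2 : (p.takeUntil i' hi').support.getLast (by simp) = i' := Walk.getLast_support _
  rw [← l1, ← l2]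
  congr 1

/-- existence of a neighbor of the endpoint on a nontrivial path -/
lemma penult_exists {v j : I} (hvj : v ≠ j) (p : G.Walk v j) :
    ∃ i, G.Adj i j ∧ i ∈ p.support := by
  have hnn : ¬ p.reverse.Nil := by
    rw [Walk.nil_iff_length_eq]
    intro h
    rw [Walk.length_reverse] at h
    exact hvj (Walk.eq_of_length_eq_zero h)
  obtain ⟨u, h, q, hq⟩ := Walk.not_nil_iff.mp hnn
  refine ⟨u, h.symm, ?_⟩
  have : u ∈ p.reverse.support := by rw [hq]; simp
  rwa [Walk.support_reverse, List.mem_reverse] at this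

/-- construction of a path crossing the edge j–k, from a vertex on the k side to one
on the j side -/
lemma cross_path (ht : G.IsTree) {j k a b : I} (hjk : G.Adj j k)
    (hp : ∃ p : G.Path a j, k ∈ p.1.support) (hq : ∃ q : G.Path b k, j ∈ q.1.support) :
    ∃ w : G.Walk a b, w.IsPath ∧ j ∈ w.support ∧ k ∈ w.support := by
  obtain ⟨p, hk⟩ := hp
  obtain ⟨q, hj⟩ := hq
  -- p' : a → k avoiding j
  set p' := p.1.takeUntil k hk with hp'def
  have hp'path : p'.IsPath := p.2.takeUntil hk
  have hp'j : j ∉ p'.support := end_not_mem_takeUntil p.2 hk hjk.ne.symm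
  -- q' : b → j avoiding k
  set q' := q.1.takeUntil j hj with hq'def
  have hq'path : q'.IsPath := q.2.takeUntil hj
  have hq'k : k ∉ q'.support := end_not_mem_takeUntil q.2 hj hjk.ne
  -- the crossing walk
  refine ⟨p'.append (Walk.cons hjk.symm q'.reverse), ?_, ?_, ?_⟩
  · rw [Walk.isPath_def, Walk.support_append, Walk.support_cons, List.tail_cons,
      Walk.support_reverse, List.nodup_append]
    refine ⟨hp'path.support_nodup, List.nodup_reverse.mpr hq'path.support_nodup, ?_⟩
    intro c hc c' hc' hcc
    subst hcc
    rw [List.mem_reverse] at hc'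
    -- c is on both p' (a → k) and q' (b → j); contradiction with side_total/side_disjoint
    have dc : (p'.dropUntil c hc).IsPath := hp'path.dropUntil hc
    have dc' : (q'.dropUntil c hc').IsPath := hq'path.dropUntil hc'
    have hjd : j ∉ (p'.dropUntil c hc).support := fun h =>
      hp'j (Walk.support_dropUntil_subset _ _ h)
    have hkd : k ∉ (q'.dropUntil c hc').support := fun h =>
      hq'k (Walk.support_dropUntil_subset _ _ h)
    rcases side_total ht hjk c with ⟨r, hr⟩ | ⟨r, hr⟩
    · exact hjd (path_unique ht r.2 dc ▸ hr)
    · exact hkd (path_unique ht r.2 dc' ▸ hr)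
  · rw [Walk.mem_support_append_iff]
    right
    simp
  · rw [Walk.mem_support_append_iff]
    left
    exact p'.end_mem_support


section Split

variable {U : Type} [Fintype U] [DecidableEq U] {D : U → Type}
  [∀ u, Fintype (D u)] [∀ u, DecidableEq (D u)]

/-- peel off one block of coordinates from a constrained sum of a product -/
lemma peel (A S : Finset U) (hAS : Disjoint A S) (f g : (∀ u, D u) → ℝ)
    (hf : ∀ z z' : ∀ u, D u, (∀ v, v ∈ A ∨ v ∈ S → z v = z' v) → f z = f z')
    (hg : ∀ z z' : ∀ u, D u, (∀ v, v ∉ A → z v = z' v) → g z = g z')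
    (x : ∀ u, D u) :
    ∑ z ∈ univ.filter (fun z : ∀ u, D u => ∀ v ∈ S, z v = x v), f z * g z
      = (∑ z ∈ univ.filter (fun z : ∀ u, D u => ∀ v, v ∉ A → z v = x v), f z)
        * (∑ z ∈ univ.filter (fun z : ∀ u, D u => ∀ v ∈ A ∪ S, z v = x v), g z) := by
  rw [Finset.sum_mul_sum, ← Finset.sum_product']
  refine Finset.sum_nbij'
    (fun z => (fun v => if v ∈ A then z v else x v, fun v => if v ∈ A then x v else z v))
    (fun p => fun v => if v ∈ A then p.1 v else p.2 v) ?_ ?_ ?_ ?_ ?_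
  · intro z hz
    try dsimp only
    rw [Finset.mem_filter] at hz
    rw [Finset.mem_product, Finset.mem_filter, Finset.mem_filter]
    refine ⟨⟨Finset.mem_univ _, fun v hv => if_neg hv⟩, Finset.mem_univ _, fun v hv => ?_⟩
    rw [Finset.mem_union] at hv
    rcases hv with hv | hv
    · exact if_pos hv
    · show (if v ∈ A then x v else z v) = x v
      rw [if_neg (fun hvA => Finset.disjoint_left.mp hAS hvA hv)]
      exact hz.2 v hv
  · intro p hp
    try dsimp only
    rw [Finset.mem_product, Finset.mem_filter, Finset.mem_filter] at hp
    rw [Finset.mem_filter]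
    refine ⟨Finset.mem_univ _, fun v hv => ?_⟩
    have hvA : v ∉ A := fun hvA => Finset.disjoint_left.mp hAS hvA hv
    show (if v ∈ A then p.1 v else p.2 v) = x v
    rw [if_neg hvA]
    exact hp.2.2 v (Finset.mem_union.mpr (Or.inr hv))
  · intro z hz
    try dsimp only
    funext v
    by_cases hv : v ∈ A <;> simp [hv]
  · intro p hp
    try dsimp only
    rw [Finset.mem_product, Finset.mem_filter, Finset.mem_filter] at hp
    ext v
    · by_cases hv : v ∈ A
      · simp [hv]
      · simp only [hv, if_false]
        exact (hp.1.2 v hv).symm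
    · by_cases hv : v ∈ A
      · simp only [hv, if_true]
        exact (hp.2.2 v (Finset.mem_union.mpr (Or.inl hv))).symm
      · simp [hv]
  · intro z hz
    try dsimp only
    rw [Finset.mem_filter] at hz
    have h1 : f z = f (fun v => if v ∈ A then z v else x v) := by
      refine hf _ _ fun v hv => ?_
      rcases hv with hv | hv
      · rw [if_pos hv]
      · rw [if_neg (fun hvA => Finset.disjoint_left.mp hAS hvA hv)]
        exact hz.2 v hv
    have h2 : g z = g (fun v => if v ∈ A then x v else z v) := by
      refine hg _ _ fun v hv => ?_
      rw [if_neg hv]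
    rw [← h1, ← h2]

/-- full splitting of a constrained sum of a product over disjoint coordinate blocks -/
lemma multiSplit {ι : Type} (A : ι → Finset U) (F : ι → (∀ u, D u) → ℝ) (T : Finset ι) :
    ∀ S : Finset U,
      (∀ i ∈ T, ∀ i' ∈ T, i ≠ i' → Disjoint (A i) (A i')) →
      (∀ i ∈ T, Disjoint (A i) S) →
      (∀ v : U, v ∉ S → ∃ i ∈ T, v ∈ A i) →
      (∀ i ∈ T, ∀ z z' : ∀ u, D u, (∀ v, v ∈ A i ∨ v ∈ S → z v = z' v) → F i z = F i z') →
      ∀ x : ∀ u, D u,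
      ∑ z ∈ univ.filter (fun z : ∀ u, D u => ∀ v ∈ S, z v = x v), ∏ i ∈ T, F i z
        = ∏ i ∈ T, ∑ z ∈ univ.filter (fun z : ∀ u, D u => ∀ v, v ∉ A i → z v = x v), F i z := by
  induction T using Finset.induction_on with
  | empty =>
    intro S hp hd hcov hF x
    have hS : univ.filter (fun z : ∀ u, D u => ∀ v ∈ S, z v = x v) = {x} := by
      ext z
      simp only [Finset.mem_filter, Finset.mem_univ, true_and, Finset.mem_singleton]
      constructor
      · intro h
        funext v
        refine h v ?_
        by_contra hv
        obtain ⟨i, hi, -⟩ := hcov v hv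
        exact absurd hi (Finset.notMem_empty i)
      · rintro rfl v hv; rfl
    simp [hS]
  | @insert a T' haT' ih =>
    intro S hp hd hcov hF x
    have hprod : ∀ z : ∀ u, D u, ∏ i ∈ insert a T', F i z = F a z * ∏ i ∈ T', F i z :=
      fun z => Finset.prod_insert haT'
    simp only [hprod]
    rw [peel (A a) S (hd a (Finset.mem_insert_self a T')) (F a)
      (fun z => ∏ i ∈ T', F i z)
      (hF a (Finset.mem_insert_self a T'))
      (fun z z' hzz => Finset.prod_congr rfl fun i hi => by
        refine hF i (Finset.mem_insert_of_mem hi) z z' fun v hv => ?_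
        rcases hv with hv | hv
        · exact hzz v fun hvA =>
            Finset.disjoint_left.mp
              (hp i (Finset.mem_insert_of_mem hi) a (Finset.mem_insert_self a T')
                (fun h => haT' (h ▸ hi))) hv hvA
        · exact hzz v fun hvA =>
            Finset.disjoint_left.mp (hd a (Finset.mem_insert_self a T')) hvA hv) x]
    rw [Finset.prod_insert haT']
    congr 1
    have hstep := ih (A a ∪ S)
      (fun i hi i' hi' hne => hp i (Finset.mem_insert_of_mem hi) i'
        (Finset.mem_insert_of_mem hi') hne)
      (fun i hi => Finset.disjoint_union_right.mpr
        ⟨hp i (Finset.mem_insert_of_mem hi) a (Finset.mem_insert_self a T')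
          (fun h => haT' (h ▸ hi)), hd i (Finset.mem_insert_of_mem hi)⟩)
      (fun v hv => by
        rw [Finset.mem_union] at hv
        push_neg at hv
        obtain ⟨i, hi, hvi⟩ := hcov v hv.2
        rcases Finset.mem_insert.mp hi with rfl | hi'
        · exact absurd hvi hv.1
        · exact ⟨i, hi', hvi⟩)
      (fun i hi z z' hzz => hF i (Finset.mem_insert_of_mem hi) z z' fun v hv => by
        rcases hv with hv | hv
        · exact hzz v (Or.inl hv)
        · exact hzz v (Or.inr (Finset.mem_union.mpr (Or.inr hv))))
      x
    exact hstep


end Split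

section JTlemmas

variable {U I : Type} [Fintype U] [DecidableEq U] [Fintype I] (J : JT U I)

lemma mem_upSet {u : U} {i j : I} :
    u ∈ upSet J i j ↔ ∃ pth : J.G.Path (J.cl u) j, i ∈ pth.1.support := by
  simp [upSet]

lemma upSet_total {j k : I} (hjk : J.G.Adj j k) (u : U) :
    u ∈ upSet J j k ∨ u ∈ upSet J k j := by
  rw [mem_upSet, mem_upSet]
  exact side_total J.tree hjk (J.cl u)

lemma upSet_disjoint {j k : I} (hjk : J.G.Adj j k) (u : U) :
    ¬(u ∈ upSet J j k ∧ u ∈ upSet J k j) := by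
  rw [mem_upSet, mem_upSet]
  rintro ⟨h1, h2⟩
  exact side_disjoint J.tree hjk h1 h2

/-- distinct neighbors of `j` have disjoint upstream sets -/
lemma upSet_nbr_disjoint {i i' j : I} (hij : J.G.Adj i j) (hi'j : J.G.Adj i' j) (hne : i ≠ i')
    {u : U} (h : u ∈ upSet J i j) (h' : u ∈ upSet J i' j) : False := by
  rw [mem_upSet] at h h'
  obtain ⟨p, hp⟩ := h
  obtain ⟨q, hq⟩ := h'
  have : p.1 = q.1 := path_unique J.tree p.2 q.2
  exact hne (penult_unique J.tree hij hi'j p.2 hp (this ▸ hq))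

/-- variables assigned to `j` are in no upstream set of a neighbor -/
lemma cl_eq_not_mem_upSet {i j : I} (hij : J.G.Adj i j) {u : U} (hu : J.cl u = j) :
    u ∉ upSet J i j := by
  rw [mem_upSet]
  rintro ⟨p, hp⟩
  subst hu
  have hpnil : p.1 = SimpleGraph.Walk.nil := path_unique J.tree p.2 SimpleGraph.Walk.IsPath.nil
  rw [hpnil] at hp
  simp only [SimpleGraph.Walk.support_nil, List.mem_singleton] at hp
  exact hij.ne hp

/-- every variable not assigned to `j` is in the upstream set of some neighbor of `j` -/
lemma exists_nbr_upSet {j : I} {u : U} (hu : J.cl u ≠ j) :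
    ∃ i ∈ nbr J j, u ∈ upSet J i j := by
  obtain ⟨p, hp, -⟩ := J.tree.existsUnique_path (J.cl u) j
  obtain ⟨i, hij, hi⟩ := penult_exists hu p
  exact ⟨i, by simp [nbr, hij], mem_upSet J |>.mpr ⟨⟨p, hp⟩, hi⟩⟩

/-- the family of an upstream variable stays within the upstream set and the separator -/
lemma faSub {j k : I} (hjk : J.G.Adj j k) {u : U} (hu : u ∈ upSet J j k) :
    ∀ v ∈ insert u (J.pa u), v ∈ upSet J j k ∪ sep J j k := by
  intro v hv
  have hvC : v ∈ J.C (J.cl u) := J.cover u hv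
  by_cases hvu : v ∈ upSet J j k
  · exact Finset.mem_union.mpr (Or.inl hvu)
  · refine Finset.mem_union.mpr (Or.inr ?_)
    have hvk : v ∈ upSet J k j := (upSet_total J hjk v).resolve_left hvu
    rw [mem_upSet] at hvk hu
    obtain ⟨w, hwp, hwj, hwk⟩ := cross_path J.tree hjk hvk hu
    have hvv : v ∈ J.C (J.cl v) := J.cover v (Finset.mem_insert_self v _)
    have hmem : v ∈ J.C (J.cl v) ∩ J.C (J.cl u) := Finset.mem_inter.mpr ⟨hvv, hvC⟩
    exact Finset.mem_inter.mpr
      ⟨J.runInter (J.cl v) (J.cl u) ⟨w, hwp⟩ j hwj hmem,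
       J.runInter (J.cl v) (J.cl u) ⟨w, hwp⟩ k hwk hmem⟩

/-- an upstream variable that lies in `C j` lies in the separator -/
lemma upSet_mem_C_mem_sep {i j : I} {v : U} (hv : v ∈ upSet J i j) (hvC : v ∈ J.C j) :
    v ∈ sep J i j := by
  rw [mem_upSet] at hv
  obtain ⟨p, hp⟩ := hv
  have hvv : v ∈ J.C (J.cl v) := J.cover v (Finset.mem_insert_self v _)
  exact Finset.mem_inter.mpr
    ⟨J.runInter (J.cl v) j p i hp (Finset.mem_inter.mpr ⟨hvv, hvC⟩), hvC⟩

lemma upSet_sdiff {i j : I} :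
    upSet J i j \ sep J i j = upSet J i j \ J.C j := by
  ext v
  simp only [Finset.mem_sdiff]
  constructor
  · rintro ⟨h1, h2⟩
    exact ⟨h1, fun hC => h2 (upSet_mem_C_mem_sep J h1 hC)⟩
  · rintro ⟨h1, h2⟩
    exact ⟨h1, fun hs => h2 (Finset.mem_inter.mp hs).2⟩

end JTlemmas


section Main

variable {U I : Type} [Fintype U] [DecidableEq U] [Fintype I] (J : JT U I)
  {D : U → Type} [∀ u, Fintype (D u)] [∀ u, DecidableEq (D u)]
  (K : (u : U) → (∀ v, D v) → ℝ)

lemma msg_eq (i j : I) (x : ∀ u, D u) :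
    msg J K i j x = ∑ z ∈ univ.filter
        (fun z : ∀ u, D u => ∀ v, v ∉ upSet J i j \ sep J i j → z v = x v),
      ∏ u ∈ upSet J i j, K u z := by
  rw [msg, Finset.sum_filter]

lemma msg_nonneg (hKnn : ∀ u z, 0 ≤ K u z) (i j : I) (x : ∀ u, D u) :
    0 ≤ msg J K i j x := by
  rw [msg]
  refine Finset.sum_nonneg fun z _ => ?_
  split
  · exact Finset.prod_nonneg fun u _ => hKnn u z
  · exact le_refl 0

/-- splitting the global product over the blocks around cluster `j` -/
lemma prod_split (j : I) (z : ∀ u, D u) :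
    ∏ u : U, K u z = (∏ u ∈ univ.filter (fun u => J.cl u = j), K u z)
      * ∏ i ∈ nbr J j, ∏ u ∈ upSet J i j, K u z := by
  have hPD : (↑(nbr J j) : Set I).PairwiseDisjoint (fun i => upSet J i j) := by
    intro i hi i' hi' hne
    simp only [Finset.coe_filter, Set.mem_setOf_eq, nbr, Finset.mem_coe,
      Finset.mem_filter] at hi hi'
    exact Finset.disjoint_left.mpr fun u hu hu' =>
      upSet_nbr_disjoint J hi.2 hi'.2 hne hu hu'
  have hbi : ∏ i ∈ nbr J j, ∏ u ∈ upSet J i j, K u z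
      = ∏ u ∈ (nbr J j).biUnion (fun i => upSet J i j), K u z :=
    (Finset.prod_biUnion hPD).symm
  have hdisj2 : Disjoint (univ.filter (fun u => J.cl u = j))
      ((nbr J j).biUnion (fun i => upSet J i j)) := by
    refine Finset.disjoint_left.mpr fun u hu hu' => ?_
    rw [Finset.mem_filter] at hu
    rw [Finset.mem_biUnion] at hu'
    obtain ⟨i, hi, hui⟩ := hu'
    rw [nbr, Finset.mem_filter] at hi
    exact cl_eq_not_mem_upSet J hi.2 hu.2 hui
  have hunion : (univ : Finset U) = univ.filter (fun u => J.cl u = j)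
      ∪ (nbr J j).biUnion (fun i => upSet J i j) := by
    ext u
    simp only [Finset.mem_univ, true_iff, Finset.mem_union, Finset.mem_filter,
      Finset.mem_biUnion]
    by_cases hu : J.cl u = j
    · exact Or.inl ⟨trivial, hu⟩
    · obtain ⟨i, hi, hui⟩ := exists_nbr_upSet J hu
      exact Or.inr ⟨i, hi, hui⟩
  rw [hbi, ← Finset.prod_union hdisj2, ← hunion]

/-- the cluster-marginal identity: P(X_{C_j}, E) = Φ_j ∏_{i ∈ n(j)} M_{i→j} -/
lemma cluster_id (hKdep : ∀ u (z z' : ∀ v, D v),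
      (∀ v ∈ insert u (J.pa u), z v = z' v) → K u z = K u z')
    (j : I) (x : ∀ u, D u) :
    margOn (fun z => ∏ u : U, K u z) (J.C j) x
      = pot J K j x * ∏ i ∈ nbr J j, msg J K i j x := by
  rw [margOn, ← Finset.sum_filter (fun z : ∀ u, D u => ∀ v ∈ J.C j, z v = x v)
    (fun z => ∏ u : U, K u z)]
  have hsummand : ∀ z ∈ univ.filter (fun z : ∀ u, D u => ∀ v ∈ J.C j, z v = x v),
      (∏ u : U, K u z)
        = pot J K j x * ∏ i ∈ nbr J j, (∏ u ∈ upSet J i j, K u z) := by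
    intro z hz
    rw [Finset.mem_filter] at hz
    rw [prod_split J K j z]
    congr 1
    refine Finset.prod_congr rfl fun u hu => ?_
    rw [Finset.mem_filter] at hu
    refine hKdep u z x fun v hv => hz.2 v ?_
    have := J.cover u hv
    rwa [hu.2] at this
  rw [Finset.sum_congr rfl hsummand, ← Finset.mul_sum]
  congr 1
  have hmulti := multiSplit (fun i => upSet J i j \ J.C j)
    (fun i z => ∏ u ∈ upSet J i j, K u z) (nbr J j) (J.C j)
    (fun i hi i' hi' hne => by
      rw [nbr, Finset.mem_filter] at hi hi'
      exact Finset.disjoint_left.mpr fun u hu hu' =>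
        upSet_nbr_disjoint J hi.2 hi'.2 hne (Finset.mem_sdiff.mp hu).1
          (Finset.mem_sdiff.mp hu').1)
    (fun i _ => Finset.sdiff_disjoint)
    (fun v hv => by
      have hcl : J.cl v ≠ j := fun h => hv (h ▸ J.cover v (Finset.mem_insert_self v _))
      obtain ⟨i, hi, hvi⟩ := exists_nbr_upSet J hcl
      exact ⟨i, hi, Finset.mem_sdiff.mpr ⟨hvi, hv⟩⟩)
    (fun i hi z z' hzz => by
      rw [nbr, Finset.mem_filter] at hi
      refine Finset.prod_congr rfl fun u hu => hKdep u z z' fun v hv => ?_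
      have hvmem := faSub J hi.2 hu v hv
      rw [Finset.mem_union] at hvmem
      refine hzz v ?_
      rcases hvmem with hvmem | hvmem
      · by_cases hvC : v ∈ J.C j
        · exact Or.inr hvC
        · exact Or.inl (Finset.mem_sdiff.mpr ⟨hvmem, hvC⟩)
      · exact Or.inr (Finset.mem_inter.mp hvmem).2)
    x
  rw [hmulti]
  refine Finset.prod_congr rfl fun i hi => ?_
  rw [msg_eq, upSet_sdiff J]

/-- the separator identity: P(X_{S_jk}, E) = M_{j→k} M_{k→j} -/
lemma sep_id (hKdep : ∀ u (z z' : ∀ v, D v),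
      (∀ v ∈ insert u (J.pa u), z v = z' v) → K u z = K u z')
    {j k : I} (hjk : J.G.Adj j k) (x : ∀ u, D u) :
    margOn (fun z => ∏ u : U, K u z) (sep J j k) x
      = msg J K j k x * msg J K k j x := by
  have hudisj : Disjoint (upSet J j k) (upSet J k j) :=
    Finset.disjoint_left.mpr fun u hu hu' => upSet_disjoint J hjk u ⟨hu, hu'⟩
  have huniv : (univ : Finset U) = upSet J j k ∪ upSet J k j := by
    ext u
    simp only [Finset.mem_univ, true_iff, Finset.mem_union]
    exact upSet_total J hjk u
  rw [margOn, ← Finset.sum_filter (fun z : ∀ u, D u => ∀ v ∈ sep J j k, z v = x v)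
    (fun z => ∏ u : U, K u z)]
  have hsummand : ∀ z : ∀ u, D u,
      (∏ u : U, K u z)
        = (∏ u ∈ upSet J j k, K u z) * ∏ u ∈ upSet J k j, K u z := by
    intro z
    rw [← Finset.prod_union hudisj, ← huniv]
  simp only [hsummand]
  rw [peel (upSet J j k \ sep J j k) (sep J j k) Finset.sdiff_disjoint
    (fun z => ∏ u ∈ upSet J j k, K u z) (fun z => ∏ u ∈ upSet J k j, K u z)
    (fun z z' hzz => by
      refine Finset.prod_congr rfl fun u hu => hKdep u z z' fun v hv => ?_
      have hvmem := faSub J hjk hu v hv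
      rw [Finset.mem_union] at hvmem
      refine hzz v ?_
      rcases hvmem with hvmem | hvmem
      · by_cases hvS : v ∈ sep J j k
        · exact Or.inr hvS
        · exact Or.inl (Finset.mem_sdiff.mpr ⟨hvmem, hvS⟩)
      · exact Or.inr hvmem)
    (fun z z' hzz => by
      refine Finset.prod_congr rfl fun u hu => hKdep u z z' fun v hv => ?_
      have hvmem := faSub J hjk.symm hu v hv
      rw [Finset.mem_union] at hvmem
      refine hzz v ?_
      rw [Finset.mem_sdiff, not_and, not_not]
      intro hvu
      rcases hvmem with hvmem | hvmem
      · exact absurd ⟨hvu, hvmem⟩ (upSet_disjoint J hjk v)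
      · rw [sep, Finset.inter_comm] at hvmem
        exact hvmem)
    x]
  congr 1
  · rw [msg_eq]
  · rw [msg_eq]
    congr 1
    refine Finset.filter_congr fun z _ => ?_
    have hset : ∀ v : U, v ∈ (upSet J j k \ sep J j k) ∪ sep J j k
        ↔ v ∉ upSet J k j \ sep J k j := by
      intro v
      rw [Finset.mem_union, Finset.mem_sdiff, Finset.mem_sdiff]
      constructor
      · rintro (⟨hv1, hv2⟩ | hv) h'
        · exact upSet_disjoint J hjk v ⟨hv1, h'.1⟩
        · rw [sep, Finset.inter_comm] at hv
          exact h'.2 hv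
      · intro h
        by_cases hvk : v ∈ upSet J k j
        · right
          rw [sep, Finset.inter_comm]
          by_contra hvs
          exact h ⟨hvk, hvs⟩
        · have hvj : v ∈ upSet J j k := (upSet_total J hjk v).resolve_right hvk
          by_cases hvs : v ∈ sep J j k
          · exact Or.inr hvs
          · exact Or.inl ⟨hvj, hvs⟩
    constructor
    · intro h v hv
      exact h v ((hset v).mpr hv)
    · intro h v hv
      exact h v ((hset v).mp hv)

end Main

end JTaux

/-- Conditional distribution of a cluster given its separator and the evidence:
P(X_{C_j} | X_{S_jk}, E) = Φ_j(X_{C_j}) ∏_{i ∈ n(j), i ≠ k} M_{i→j}(X_{S_ij}) / M_{j→k}(X_{S_jk}). -/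
theorem jt_cluster_conditional {U I : Type} [Fintype U] [DecidableEq U] [Fintype I]
    (J : JT U I) {D : U → Type} [∀ u, Fintype (D u)] [∀ u, DecidableEq (D u)]
    (cpd : (u : U) → (∀ v, D v) → ℝ) (ev : (u : U) → Finset (D u))
    (K : (u : U) → (∀ v, D v) → ℝ)
    (hK : ∀ u x, K u x = (if x u ∈ ev u then (1 : ℝ) else 0) * cpd u x)
    (hloc : ∀ u x x', (∀ v ∈ insert u (J.pa u), x v = x' v) → cpd u x = cpd u x')
    (hnn : ∀ u x, 0 ≤ cpd u x)
    (j k : I) (hjk : J.G.Adj j k) (x : ∀ u, D u)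
    (hpos : 0 < margOn (fun z => ∏ u : U, K u z) (sep J j k) x) :
    margOn (fun z => ∏ u : U, K u z) (J.C j) x /
        margOn (fun z => ∏ u : U, K u z) (sep J j k) x =
      pot J K j x * (∏ i ∈ (nbr J j).erase k, msg J K i j x) / msg J K j k x := by
  have hKdep : ∀ u (z z' : ∀ v, D v),
      (∀ v ∈ insert u (J.pa u), z v = z' v) → K u z = K u z' := by
    intro u z z' h
    rw [hK, hK, h u (Finset.mem_insert_self u _), hloc u z z' h]
  have hKnn : ∀ u z, 0 ≤ K u z := by
    intro u z
    rw [hK]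
    refine mul_nonneg ?_ (hnn u z)
    split <;> norm_num
  have h1 := JTaux.cluster_id J K hKdep j x
  have h2 := JTaux.sep_id J K hKdep hjk x
  have hkmem : k ∈ nbr J j := by
    rw [nbr, Finset.mem_filter]
    exact ⟨Finset.mem_univ k, hjk.symm⟩
  have hprod : ∏ i ∈ nbr J j, msg J K i j x
      = msg J K k j x * ∏ i ∈ (nbr J j).erase k, msg J K i j x :=
    (Finset.mul_prod_erase _ _ hkmem).symm
  rw [h2] at hpos
  have hm1 : 0 < msg J K j k x := by
    rcases (JTaux.msg_nonneg J K hKnn j k x).lt_or_eq with h | h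
    · exact h
    · rw [← h, zero_mul] at hpos
      exact absurd hpos (lt_irrefl 0)
  have hm2 : 0 < msg J K k j x := by
    rcases (JTaux.msg_nonneg J K hKnn k j x).lt_or_eq with h | h
    · exact h
    · rw [← h, mul_zero] at hpos
      exact absurd hpos (lt_irrefl 0)
  rw [h1, h2, hprod]
  rw [div_eq_div_iff (mul_pos hm1 hm2).ne' hm1.ne']
  ring
end

section
/- Define max-messages M^max_{i→j}(X_{S_{ij}}) = max over assignments X_{V_{i→j}} of ∏_{u ∈ U_{i→j}} K_u(X_{fa(u)}). Then for any junction-tree edge i–j, max over assignments X_{U \ S_{ij}} of ∏_{u ∈ U} K_u(X_{fa(u)}) equals M^max_{i→j}(X_{S_{ij}}) · M^max_{j→i}(X_{S_{ij}}). -/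
open Finset
open scoped Classical

/-- The max-message M^max_{i→j}(X_{S_ij}) = max_{X_{V_{i→j}}} ∏_{u ∈ U_{i→j}} K_u. -/
noncomputable def maxMsg {U I : Type} [Fintype U] [DecidableEq U] [Fintype I]
    (J : JT U I) {D : U → Type} [∀ u, Fintype (D u)] [∀ u, DecidableEq (D u)]
    (K : (u : U) → (∀ v, D v) → ℝ) (i j : I) (x : ∀ u, D u) : ℝ :=
  (Finset.univ.filter fun z : ∀ u, D u => ∀ v, v ∉ upSet J i j \ sep J i j → z v = x v).sup'
    (Finset.filter_nonempty_iff.mpr ⟨x, Finset.mem_univ x, fun _ _ => rfl⟩)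
    (fun z => ∏ u ∈ upSet J i j, K u z)
open Finset SimpleGraph
open scoped Classical

section TreeLemmas
variable {I : Type} {G : SimpleGraph I}

lemma path_unique (hG : G.IsTree) {a b : I} {p q : G.Walk a b} (hp : p.IsPath) (hq : q.IsPath) :
    p = q :=
  (hG.existsUnique_path a b).unique hp hq

/-- if the path a→j goes through i, then the path a→i (its prefix) avoids j -/
lemma takeUntil_avoid {a i j : I} (hne : i ≠ j) {p : G.Walk a j} (hp : p.IsPath)
    (hi : i ∈ p.support) : j ∉ (p.takeUntil i hi).support := by
  classical
  intro hj
  have hspec := p.take_spec hi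
  have hnd : p.support.Nodup := hp.support_nodup
  rw [← hspec, SimpleGraph.Walk.support_append] at hnd
  have hdisj := (List.nodup_append.mp hnd).2.2
  have hj' : j ∈ (p.dropUntil i hi).support.tail := by
    have hjs : j ∈ (p.dropUntil i hi).support := SimpleGraph.Walk.end_mem_support _
    rw [SimpleGraph.Walk.support_eq_cons (p.dropUntil i hi)] at hjs
    rcases List.mem_cons.mp hjs with h | h
    · exact absurd h.symm hne
    · exact h
  exact hdisj j hj j hj' rfl

/-- side exclusivity -/
lemma side_excl (hG : G.IsTree) {a i j : I} (hne : i ≠ j) {p : G.Walk a j} (hp : p.IsPath)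
    {q : G.Walk a i} (hq : q.IsPath) (hi : i ∈ p.support) : j ∉ q.support := by
  classical
  have : q = p.takeUntil i hi := path_unique hG hq (hp.takeUntil hi)
  rw [this]; exact takeUntil_avoid hne hp hi

/-- side totality -/
lemma side_total (hG : G.IsTree) {a i j : I} (hij : G.Adj i j) {p : G.Walk a j} (hp : p.IsPath)
    {q : G.Walk a i} (hq : q.IsPath) (hi : i ∉ p.support) : j ∈ q.support := by
  classical
  have hrev : (SimpleGraph.Walk.cons hij p.reverse).IsPath := by
    rw [SimpleGraph.Walk.cons_isPath_iff]
    refine ⟨hp.reverse, ?_⟩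
    rwa [SimpleGraph.Walk.support_reverse, List.mem_reverse]
  have hq' : q = (SimpleGraph.Walk.cons hij p.reverse).reverse :=
    path_unique hG hq hrev.reverse
  rw [hq']
  simp [SimpleGraph.Walk.support_reverse, SimpleGraph.Walk.support_cons]

/-- the path between the two sides of an edge crosses the edge -/
lemma cross_edge (hG : G.IsTree) {a b i j : I} (hij : G.Adj i j)
    {pab : G.Walk a b} (hpab : pab.IsPath)
    {paj : G.Walk a j} (hpaj : paj.IsPath) (hi : i ∈ paj.support)
    {pbj : G.Walk b j} (hpbj : pbj.IsPath) (hbi : i ∉ pbj.support) :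
    i ∈ pab.support ∧ j ∈ pab.support := by
  classical
  constructor
  · by_contra hnot
    have hw : paj = (pab.append pbj).bypass :=
      path_unique hG hpaj (SimpleGraph.Walk.bypass_isPath _)
    have : i ∈ (pab.append pbj).support := SimpleGraph.Walk.support_bypass_subset _ (hw ▸ hi)
    rw [SimpleGraph.Walk.support_append] at this
    rcases List.mem_append.mp this with h | h
    · exact hnot h
    · exact hbi (List.mem_of_mem_tail h)
  · by_contra hnot
    have hbi' : j ∈ (pab.reverse.append (paj.takeUntil i hi)).bypass.support :=
      side_total hG hij hpbj (SimpleGraph.Walk.bypass_isPath _) hbi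
    have := SimpleGraph.Walk.support_bypass_subset _ hbi'
    rw [SimpleGraph.Walk.support_append] at this
    rcases List.mem_append.mp this with h | h
    · rw [SimpleGraph.Walk.support_reverse, List.mem_reverse] at h
      exact hnot h
    · exact takeUntil_avoid hij.ne hpaj hi (List.mem_of_mem_tail h)

end TreeLemmas

section JTLemmas
variable {U I : Type} [Fintype U] [DecidableEq U] [Fintype I]
variable (J : JT U I) {i j : I}

lemma mem_upSet_iff_s17 {u : U} : u ∈ upSet J i j ↔ ∃ pth : J.G.Path (J.cl u) j, i ∈ pth.1.support := by
  simp [upSet]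

lemma upSet_union (hij : J.G.Adj i j) (u : U) : u ∈ upSet J i j ∨ u ∈ upSet J j i := by
  classical
  obtain ⟨pj⟩ := (J.tree.isConnected (J.cl u) j)
  obtain ⟨pi⟩ := (J.tree.isConnected (J.cl u) i)
  by_cases h : i ∈ pj.toPath.1.support
  · exact Or.inl ((mem_upSet_iff_s17 J).mpr ⟨pj.toPath, h⟩)
  · refine Or.inr ((mem_upSet_iff_s17 J).mpr ⟨pi.toPath, ?_⟩)
    exact side_total J.tree hij pj.toPath.2 pi.toPath.2 h

lemma upSet_disjoint_s17 (hij : J.G.Adj i j) (u : U) :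
    u ∈ upSet J i j → u ∉ upSet J j i := by
  rw [mem_upSet_iff_s17, mem_upSet_iff_s17]
  rintro ⟨p, hp⟩ ⟨q, hq⟩
  exact side_excl J.tree hij.ne p.2 q.2 hp hq

/-- covering: the family of a variable on the i-side is contained in upSet ∪ sep -/
lemma fa_subset (hij : J.G.Adj i j) {u v : U} (hu : u ∈ upSet J i j)
    (hv : v ∈ insert u (J.pa u)) (hv' : v ∉ upSet J i j) : v ∈ sep J i j := by
  classical
  obtain ⟨p, hp⟩ := (mem_upSet_iff_s17 J).mp hu
  obtain ⟨pab⟩ := (J.tree.isConnected (J.cl u) (J.cl v))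
  obtain ⟨pvj⟩ := (J.tree.isConnected (J.cl v) j)
  have hvnot : i ∉ pvj.toPath.1.support := fun h => hv' ((mem_upSet_iff_s17 J).mpr ⟨pvj.toPath, h⟩)
  obtain ⟨hi2, hj2⟩ := cross_edge J.tree hij pab.toPath.2 p.2 hp pvj.toPath.2 hvnot
  have hvu : v ∈ J.C (J.cl u) := J.cover u hv
  have hvv : v ∈ J.C (J.cl v) := J.cover v (Finset.mem_insert_self v _)
  have h1 := J.runInter _ _ pab.toPath i hi2 (Finset.mem_inter.mpr ⟨hvu, hvv⟩)
  have h2 := J.runInter _ _ pab.toPath j hj2 (Finset.mem_inter.mpr ⟨hvu, hvv⟩)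
  exact Finset.mem_inter.mpr ⟨h1, h2⟩

lemma sep_comm : sep J j i = sep J i j := Finset.inter_comm _ _

end JTLemmas

lemma prod_upSet_congr {U I : Type} [Fintype U] [DecidableEq U] [Fintype I]
    (J : JT U I) {D : U → Type} [∀ u, Fintype (D u)] [∀ u, DecidableEq (D u)]
    {i j : I} (hij : J.G.Adj i j)
    (cpd : (u : U) → (∀ v, D v) → ℝ) (ev : (u : U) → Finset (D u))
    (K : (u : U) → (∀ v, D v) → ℝ)
    (hK : ∀ u x, K u x = (if x u ∈ ev u then (1 : ℝ) else 0) * cpd u x)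
    (hloc : ∀ u x x', (∀ v ∈ insert u (J.pa u), x v = x' v) → cpd u x = cpd u x')
    (z z' : ∀ u, D u)
    (h : ∀ v, v ∈ upSet J i j ∪ sep J i j → z v = z' v) :
    ∏ u ∈ upSet J i j, K u z = ∏ u ∈ upSet J i j, K u z' := by
  refine Finset.prod_congr rfl fun u hu => ?_
  rw [hK, hK, h u (Finset.mem_union_left _ hu)]
  congr 1
  refine hloc u z z' fun v hv => ?_
  by_cases hvu : v ∈ upSet J i j
  · exact h v (Finset.mem_union_left _ hvu)
  · exact h v (Finset.mem_union_right _ (fa_subset J hij hu hv hvu))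

/-- Max-product propagation: the maximum over assignments of X_{U \ S_ij} of the full product
of potentials factorizes as M^max_{i→j}(X_{S_ij}) · M^max_{j→i}(X_{S_ij}). -/
theorem jt_max_message_factorization {U I : Type} [Fintype U] [DecidableEq U] [Fintype I]
    (J : JT U I) {D : U → Type} [∀ u, Fintype (D u)] [∀ u, DecidableEq (D u)]
    (cpd : (u : U) → (∀ v, D v) → ℝ) (ev : (u : U) → Finset (D u))
    (K : (u : U) → (∀ v, D v) → ℝ)
    (hK : ∀ u x, K u x = (if x u ∈ ev u then (1 : ℝ) else 0) * cpd u x)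
    (hloc : ∀ u x x', (∀ v ∈ insert u (J.pa u), x v = x' v) → cpd u x = cpd u x')
    (hnn : ∀ u x, 0 ≤ cpd u x)
    (i j : I) (hij : J.G.Adj i j) (x : ∀ u, D u) :
    (Finset.univ.filter fun z : ∀ u, D u => ∀ v ∈ sep J i j, z v = x v).sup'
        (Finset.filter_nonempty_iff.mpr ⟨x, Finset.mem_univ x, fun _ _ => rfl⟩)
        (fun z => ∏ u : U, K u z) =
      maxMsg J K i j x * maxMsg J K j i x := by
  classical
  have hKnn : ∀ u z, 0 ≤ K u z := fun u z => by
    rw [hK]; exact mul_nonneg (by split_ifs <;> norm_num) (hnn u z)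
  have hSji : sep J j i = sep J i j := sep_comm J
  have hU : (Finset.univ : Finset U) = upSet J i j ∪ upSet J j i := by
    ext u
    simp only [Finset.mem_univ, Finset.mem_union, true_iff]
    exact upSet_union J hij u
  have hdisj : Disjoint (upSet J i j) (upSet J j i) := by
    rw [Finset.disjoint_left]
    exact fun u hu => upSet_disjoint_s17 J hij u hu
  have hsplit : ∀ z : ∀ u, D u,
      ∏ u : U, K u z = (∏ u ∈ upSet J i j, K u z) * (∏ u ∈ upSet J j i, K u z) := by
    intro z
    rw [show (Finset.univ : Finset U) = upSet J i j ∪ upSet J j i from hU,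
      Finset.prod_union hdisj]
  -- nonnegativity of the max messages
  have hN1 : (0:ℝ) ≤ maxMsg J K i j x := by
    rw [maxMsg]
    exact le_trans (Finset.prod_nonneg fun u _ => hKnn u x)
      (Finset.le_sup' (fun z => ∏ u ∈ upSet J i j, K u z)
        (Finset.mem_filter.mpr ⟨Finset.mem_univ x, fun _ _ => rfl⟩))
  refine le_antisymm (Finset.sup'_le _ _ fun z hz => ?_) ?_
  · have hzS : ∀ v ∈ sep J i j, z v = x v := (Finset.mem_filter.mp hz).2
    set z1 : ∀ u, D u := fun v => if v ∈ upSet J i j \ sep J i j then z v else x v with hz1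
    set z2 : ∀ u, D u := fun v => if v ∈ upSet J j i \ sep J j i then z v else x v with hz2
    have h1 : ∏ u ∈ upSet J i j, K u z = ∏ u ∈ upSet J i j, K u z1 := by
      refine prod_upSet_congr J hij cpd ev K hK hloc z z1 fun v hv => ?_
      by_cases hv1 : v ∈ upSet J i j \ sep J i j
      · exact (if_pos hv1).symm
      · have hvS : v ∈ sep J i j := by
          rcases Finset.mem_union.mp hv with h | h
          · by_contra hnS; exact hv1 (Finset.mem_sdiff.mpr ⟨h, hnS⟩)
          · exact h
        rw [show z1 v = x v from if_neg hv1, hzS v hvS]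
    have h2 : ∏ u ∈ upSet J j i, K u z = ∏ u ∈ upSet J j i, K u z2 := by
      refine prod_upSet_congr J hij.symm cpd ev K hK hloc z z2 fun v hv => ?_
      by_cases hv2 : v ∈ upSet J j i \ sep J j i
      · exact (if_pos hv2).symm
      · have hvS : v ∈ sep J i j := by
          rcases Finset.mem_union.mp hv with h | h
          · by_contra hnS
            exact hv2 (Finset.mem_sdiff.mpr ⟨h, fun hc => hnS (hSji ▸ hc)⟩)
          · exact hSji ▸ h
        rw [show z2 v = x v from if_neg hv2, hzS v hvS]
    have hmem1 : z1 ∈ (Finset.univ.filter fun w : ∀ u, D u =>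
        ∀ v, v ∉ upSet J i j \ sep J i j → w v = x v) := by
      exact Finset.mem_filter.mpr ⟨Finset.mem_univ _, fun v hv => if_neg hv⟩
    have hmem2 : z2 ∈ (Finset.univ.filter fun w : ∀ u, D u =>
        ∀ v, v ∉ upSet J j i \ sep J j i → w v = x v) := by
      exact Finset.mem_filter.mpr ⟨Finset.mem_univ _, fun v hv => if_neg hv⟩
    have hle1 : ∏ u ∈ upSet J i j, K u z1 ≤ maxMsg J K i j x := by
      rw [maxMsg]
      exact Finset.le_sup' (fun w => ∏ u ∈ upSet J i j, K u w) hmem1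
    have hle2 : ∏ u ∈ upSet J j i, K u z2 ≤ maxMsg J K j i x := by
      rw [maxMsg]
      exact Finset.le_sup' (fun w => ∏ u ∈ upSet J j i, K u w) hmem2
    rw [hsplit z, h1, h2]
    exact mul_le_mul hle1 hle2 (Finset.prod_nonneg fun u _ => hKnn u z2) hN1
  · obtain ⟨z1, hz1mem, hz1eq⟩ := Finset.exists_mem_eq_sup'
      (s := Finset.univ.filter fun w : ∀ u, D u => ∀ v, v ∉ upSet J i j \ sep J i j → w v = x v)
      (Finset.filter_nonempty_iff.mpr ⟨x, Finset.mem_univ x, fun _ _ => rfl⟩)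
      (fun z => ∏ u ∈ upSet J i j, K u z)
    obtain ⟨z2, hz2mem, hz2eq⟩ := Finset.exists_mem_eq_sup'
      (s := Finset.univ.filter fun w : ∀ u, D u => ∀ v, v ∉ upSet J j i \ sep J j i → w v = x v)
      (Finset.filter_nonempty_iff.mpr ⟨x, Finset.mem_univ x, fun _ _ => rfl⟩)
      (fun z => ∏ u ∈ upSet J j i, K u z)
    have hz1x : ∀ v, v ∉ upSet J i j \ sep J i j → z1 v = x v :=
      (Finset.mem_filter.mp hz1mem).2
    have hz2x : ∀ v, v ∉ upSet J j i \ sep J j i → z2 v = x v :=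
      (Finset.mem_filter.mp hz2mem).2
    set z : ∀ u, D u := fun v =>
      if v ∈ upSet J i j \ sep J i j then z1 v
      else if v ∈ upSet J j i \ sep J j i then z2 v else x v with hzdef
    have hzmem : z ∈ (Finset.univ.filter fun w : ∀ u, D u => ∀ v ∈ sep J i j, w v = x v) := by
      refine Finset.mem_filter.mpr ⟨Finset.mem_univ _, fun v hv => ?_⟩
      have h1 : v ∉ upSet J i j \ sep J i j := fun h => (Finset.mem_sdiff.mp h).2 hv
      have h2 : v ∉ upSet J j i \ sep J j i := fun h => (Finset.mem_sdiff.mp h).2 (hSji ▸ hv)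
      show (if v ∈ upSet J i j \ sep J i j then z1 v
        else if v ∈ upSet J j i \ sep J j i then z2 v else x v) = x v
      rw [if_neg h1, if_neg h2]
    have h1 : ∏ u ∈ upSet J i j, K u z = ∏ u ∈ upSet J i j, K u z1 := by
      refine prod_upSet_congr J hij cpd ev K hK hloc z z1 fun v hv => ?_
      show (if v ∈ upSet J i j \ sep J i j then z1 v
        else if v ∈ upSet J j i \ sep J j i then z2 v else x v) = z1 v
      by_cases hv1 : v ∈ upSet J i j \ sep J i j
      · rw [if_pos hv1]
      · have hvS : v ∈ sep J i j := by
          rcases Finset.mem_union.mp hv with h | h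
          · by_contra hnS; exact hv1 (Finset.mem_sdiff.mpr ⟨h, hnS⟩)
          · exact h
        have h2 : v ∉ upSet J j i \ sep J j i := fun h => (Finset.mem_sdiff.mp h).2 (hSji ▸ hvS)
        rw [if_neg hv1, if_neg h2, hz1x v hv1]
    have h2 : ∏ u ∈ upSet J j i, K u z = ∏ u ∈ upSet J j i, K u z2 := by
      refine prod_upSet_congr J hij.symm cpd ev K hK hloc z z2 fun v hv => ?_
      show (if v ∈ upSet J i j \ sep J i j then z1 v
        else if v ∈ upSet J j i \ sep J j i then z2 v else x v) = z2 v
      by_cases hv2 : v ∈ upSet J j i \ sep J j i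
      · have hv1 : v ∉ upSet J i j \ sep J i j := by
          intro h
          exact (Finset.disjoint_left.mp hdisj (Finset.mem_sdiff.mp h).1)
            (Finset.mem_sdiff.mp hv2).1
        rw [if_neg hv1, if_pos hv2]
      · have hvS : v ∈ sep J j i := by
          rcases Finset.mem_union.mp hv with h | h
          · by_contra hnS; exact hv2 (Finset.mem_sdiff.mpr ⟨h, hnS⟩)
          · exact h
        have hv1 : v ∉ upSet J i j \ sep J i j :=
          fun h => (Finset.mem_sdiff.mp h).2 (hSji ▸ hvS)
        rw [if_neg hv1, if_neg hv2, hz2x v hv2]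
    calc maxMsg J K i j x * maxMsg J K j i x
        = (∏ u ∈ upSet J i j, K u z1) * (∏ u ∈ upSet J j i, K u z2) := by
          rw [maxMsg, maxMsg, hz1eq, hz2eq]
      _ = (∏ u ∈ upSet J i j, K u z) * (∏ u ∈ upSet J j i, K u z) := by rw [h1, h2]
      _ = ∏ u : U, K u z := (hsplit z).symm
      _ ≤ _ := Finset.le_sup' (fun w => ∏ u : U, K u w) hzmem
end
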